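/- arXiv:2504.20623 — 5 statements merged into one kernel-verified Lean document; each statement's English description precedes it below -/
import Mathlib

section
/- Consider the signal channel model with parameters N, K, σ, μ, r₀, α. For every 1 ≤ k ≤ K, one has E[|g₀|² |g_k|²] = r₀^{−2α} σ⁴ (N μ² + N²), E[|g₀|²] = E[|g_k|²] = r₀^{−α} N σ², and Var[|g₀|²] = Var[|g_k|²] = r₀^{−2α} N σ⁴. -/
open MeasureTheory ProbabilityTheory Real Set
open scoped NNReal ENNReal

lemma aux_gauss_density :
    gaussianReal 0 (1/2) =
      volume.withDensity (fun x => ENNReal.ofReal ((Real.sqrt π)⁻¹ * Real.exp (-x^2))) := by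
  rw [gaussianReal_of_var_ne_zero 0 (by norm_num)]
  congr 1
  ext x
  unfold gaussianPDF gaussianPDFReal
  have h2 : ((1/2 : ℝ≥0) : ℝ) = 1/2 := by norm_num
  congr 1
  rw [h2, show (2:ℝ) * π * (1/2) = π by ring, show (2:ℝ) * (1/2) = 1 by ring]
  norm_num

lemma aux_gauss_integral (f : ℝ → ℝ) :
    ∫ x, f x ∂(gaussianReal 0 (1/2))
      = ∫ x, (Real.sqrt π)⁻¹ * (f x * Real.exp (-x^2)) := by
  rw [aux_gauss_density]
  have hd : Measurable fun x : ℝ => ((Real.sqrt π)⁻¹ * Real.exp (-x^2)).toNNReal :=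
    (((measurable_id.pow_const 2).neg.exp).const_mul _).real_toNNReal
  rw [show (fun x : ℝ => ENNReal.ofReal ((Real.sqrt π)⁻¹ * Real.exp (-x^2)))
      = (fun x : ℝ => (((((Real.sqrt π)⁻¹ * Real.exp (-x^2)).toNNReal : ℝ≥0)) : ℝ≥0∞)) from rfl]
  rw [integral_withDensity_eq_integral_smul hd f]
  congr 1
  ext x
  rw [NNReal.smul_def, smul_eq_mul, Real.coe_toNNReal _ (by positivity)]
  ring

lemma aux_gauss_integrable_iff (f : ℝ → ℝ) :
    Integrable f (gaussianReal 0 (1/2))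
      ↔ Integrable (fun x => (Real.sqrt π)⁻¹ * (f x * Real.exp (-x^2))) volume := by
  rw [aux_gauss_density]
  have hd : Measurable fun x : ℝ => ((Real.sqrt π)⁻¹ * Real.exp (-x^2)).toNNReal :=
    (((measurable_id.pow_const 2).neg.exp).const_mul _).real_toNNReal
  rw [show (fun x : ℝ => ENNReal.ofReal ((Real.sqrt π)⁻¹ * Real.exp (-x^2)))
      = (fun x : ℝ => (((((Real.sqrt π)⁻¹ * Real.exp (-x^2)).toNNReal : ℝ≥0)) : ℝ≥0∞)) from rfl]
  rw [integrable_withDensity_iff_integrable_smul hd]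
  constructor <;> intro h <;> refine h.congr (ae_of_all _ fun x => ?_)
  · simp only [NNReal.smul_def, smul_eq_mul]
    rw [Real.coe_toNNReal _ (by positivity)]; ring
  · simp only [NNReal.smul_def, smul_eq_mul]
    rw [Real.coe_toNNReal _ (by positivity)]; ring

lemma aux_integrable_pow_exp (n : ℕ) :
    Integrable (fun x : ℝ => x ^ n * Real.exp (-x^2)) := by
  have h := integrable_rpow_mul_exp_neg_mul_sq (b := 1) one_pos
    (s := (n : ℝ)) (by exact lt_of_lt_of_le neg_one_lt_zero (Nat.cast_nonneg n))
  simpa [Real.rpow_natCast] using h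

lemma aux_gauss_integrable_pow (n : ℕ) :
    Integrable (fun x : ℝ => x ^ n) (gaussianReal 0 (1/2)) := by
  rw [aux_gauss_integrable_iff]
  exact (aux_integrable_pow_exp n).const_mul _

lemma aux_int_odd (n : ℕ) (hn : Odd n) : ∫ x : ℝ, x ^ n * Real.exp (-x^2) = 0 := by
  have key : ∀ x : ℝ, (-x) ^ n * Real.exp (-(-x)^2) = -(x ^ n * Real.exp (-x^2)) := fun x => by
    rw [hn.neg_pow, neg_sq]; ring
  have h : (∫ x : ℝ, x ^ n * Real.exp (-x^2)) = -∫ x : ℝ, x ^ n * Real.exp (-x^2) := by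
    calc (∫ x : ℝ, x ^ n * Real.exp (-x^2))
        = ∫ x : ℝ, (-x) ^ n * Real.exp (-(-x)^2) :=
          (integral_neg_eq_self (fun x : ℝ => x ^ n * Real.exp (-x^2)) volume).symm
      _ = ∫ x : ℝ, -(x ^ n * Real.exp (-x^2)) := by simp only [key]
      _ = -∫ x : ℝ, x ^ n * Real.exp (-x^2) := integral_neg _
  linarith

lemma aux_int_even2 : ∫ x : ℝ, x ^ 2 * Real.exp (-x^2) = Real.sqrt π / 2 := by
  have habs := integral_comp_abs (f := fun t : ℝ => t ^ 2 * Real.exp (-t^2))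
  simp only [sq_abs] at habs
  rw [habs]
  have hc : ∀ x : ℝ, x ^ (2:ℝ) = x ^ (2:ℕ) := fun x => by
    rw [← Real.rpow_natCast x 2]; norm_num
  have hI := integral_rpow_mul_exp_neg_rpow (p := 2) (q := 2) (by norm_num) (by norm_num)
  simp only [hc] at hI
  rw [hI, show ((2:ℝ)+1)/2 = 1/2 + 1 by norm_num,
    Real.Gamma_add_one (by norm_num), Real.Gamma_one_half_eq]
  ring

lemma aux_int_even4 : ∫ x : ℝ, x ^ 4 * Real.exp (-x^2) = 3 * Real.sqrt π / 4 := by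
  have habs := integral_comp_abs (f := fun t : ℝ => t ^ 4 * Real.exp (-t^2))
  have habs4 : ∀ x : ℝ, |x| ^ 4 = x ^ 4 := fun x => by
    rw [show (4:ℕ) = 2*2 by norm_num, pow_mul, pow_mul, sq_abs]
  simp only [sq_abs, habs4] at habs
  rw [habs]
  have hc2 : ∀ x : ℝ, x ^ (2:ℝ) = x ^ (2:ℕ) := fun x => by
    rw [← Real.rpow_natCast x 2]; norm_num
  have hc4 : ∀ x : ℝ, x ^ (4:ℝ) = x ^ (4:ℕ) := fun x => by
    rw [← Real.rpow_natCast x 4]; norm_num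
  have hI := integral_rpow_mul_exp_neg_rpow (p := 2) (q := 4) (by norm_num) (by norm_num)
  simp only [hc2, hc4] at hI
  rw [hI, show ((4:ℝ)+1)/2 = 3/2 + 1 by norm_num, Real.Gamma_add_one (by norm_num),
    show (3/2:ℝ) = 1/2 + 1 by norm_num, Real.Gamma_add_one (by norm_num),
    Real.Gamma_one_half_eq]
  ring

lemma aux_sqrt_pi_ne : Real.sqrt π ≠ 0 := ne_of_gt (Real.sqrt_pos.mpr Real.pi_pos)

lemma aux_gm1 : ∫ x, x ^ (1:ℕ) ∂(gaussianReal 0 (1/2)) = 0 := by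
  rw [aux_gauss_integral, integral_const_mul, aux_int_odd 1 (by norm_num), mul_zero]

lemma aux_gm3 : ∫ x, x ^ (3:ℕ) ∂(gaussianReal 0 (1/2)) = 0 := by
  rw [aux_gauss_integral, integral_const_mul, aux_int_odd 3 ⟨1, by norm_num⟩, mul_zero]

lemma aux_gm2 : ∫ x, x ^ (2:ℕ) ∂(gaussianReal 0 (1/2)) = 1/2 := by
  rw [aux_gauss_integral, integral_const_mul, aux_int_even2]
  field_simp

lemma aux_gm4 : ∫ x, x ^ (4:ℕ) ∂(gaussianReal 0 (1/2)) = 3/4 := by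
  rw [aux_gauss_integral, integral_const_mul, aux_int_even4]
  rw [inv_mul_eq_div, div_eq_iff aux_sqrt_pi_ne]
  ring

lemma aux_indep_comp4 {Ω ι : Type*} [MeasurableSpace Ω] [DecidableEq ι] {P : Measure Ω}
    {Z : ι → Ω → ℝ}
    (hindep : iIndepFun Z P) (hmeas : ∀ p, Measurable (Z p))
    {i1 i2 i3 i4 j1 j2 j3 j4 : ι}
    (hd : Disjoint ({i1, i2, i3, i4} : Finset ι) ({j1, j2, j3, j4} : Finset ι))
    {φ ψ : ℝ → ℝ → ℝ → ℝ → ℝ}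
    (hφ : Measurable fun x : ℝ × ℝ × ℝ × ℝ => φ x.1 x.2.1 x.2.2.1 x.2.2.2)
    (hψ : Measurable fun x : ℝ × ℝ × ℝ × ℝ => ψ x.1 x.2.1 x.2.2.1 x.2.2.2) :
    IndepFun (fun ω => φ (Z i1 ω) (Z i2 ω) (Z i3 ω) (Z i4 ω))
      (fun ω => ψ (Z j1 ω) (Z j2 ω) (Z j3 ω) (Z j4 ω)) P := by
  have h := hindep.indepFun_finset {i1, i2, i3, i4} {j1, j2, j3, j4} hd hmeas
  have hp1 : Measurable fun f : (({i1, i2, i3, i4} : Finset ι) : Set ι) → ℝ =>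
      ((f ⟨i1, by simp⟩, f ⟨i2, by simp⟩, f ⟨i3, by simp⟩, f ⟨i4, by simp⟩) : ℝ × ℝ × ℝ × ℝ) :=
    (measurable_pi_apply _).prodMk ((measurable_pi_apply _).prodMk
      ((measurable_pi_apply _).prodMk (measurable_pi_apply _)))
  have hp2 : Measurable fun f : (({j1, j2, j3, j4} : Finset ι) : Set ι) → ℝ =>
      ((f ⟨j1, by simp⟩, f ⟨j2, by simp⟩, f ⟨j3, by simp⟩, f ⟨j4, by simp⟩) : ℝ × ℝ × ℝ × ℝ) :=
    (measurable_pi_apply _).prodMk ((measurable_pi_apply _).prodMk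
      ((measurable_pi_apply _).prodMk (measurable_pi_apply _)))
  have hm1 : Measurable fun f : (({i1, i2, i3, i4} : Finset ι) : Set ι) → ℝ =>
      φ (f ⟨i1, by simp⟩) (f ⟨i2, by simp⟩) (f ⟨i3, by simp⟩) (f ⟨i4, by simp⟩) := hφ.comp hp1
  have hm2 : Measurable fun f : (({j1, j2, j3, j4} : Finset ι) : Set ι) → ℝ =>
      ψ (f ⟨j1, by simp⟩) (f ⟨j2, by simp⟩) (f ⟨j3, by simp⟩) (f ⟨j4, by simp⟩) := hψ.comp hp2
  exact h.comp hm1 hm2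

set_option maxHeartbeats 1000000 in
/-- in the correlated signal channel model with MRT precoding, for every
port `1 ≤ k ≤ K` one has `E[|g₀|²|g_k|²] = r₀^{−2α} σ⁴ (Nμ² + N²)`,
`E[|g₀|²] = E[|g_k|²] = r₀^{−α} N σ²`, and `Var[|g₀|²] = Var[|g_k|²] = r₀^{−2α} N σ⁴`
(variance written as `E[X²] − E[X]²`). -/
theorem stmt_1
    {Ωs : Type*} [MeasurableSpace Ωs] (P : Measure Ωs) [IsProbabilityMeasure P]
    (N K : ℕ) (hN : 1 ≤ N) (hK : 1 ≤ K)
    (σ μ r₀ α : ℝ) (hσ : 0 < σ) (hμ : μ ∈ Set.Ioo (0 : ℝ) 1) (hr : 0 < r₀) (hα : 0 < α)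
    (Z : Fin N × Fin (K + 1) × Bool → Ωs → ℝ)
    (hmeas : ∀ p, Measurable (Z p))
    (hindep : iIndepFun Z P)
    (hgauss : ∀ p, Measure.map (Z p) P = gaussianReal 0 (1 / 2))
    (h : Fin N → Fin (K + 1) → Ωs → ℂ)
    (hh0 : ∀ n ω, h n 0 ω = Complex.ofReal (σ * Z (n, 0, false) ω) +
      Complex.ofReal (σ * Z (n, 0, true) ω) * Complex.I)
    (hhk : ∀ n (k : Fin (K + 1)), k ≠ 0 → ∀ ω, h n k ω =
      Complex.ofReal (σ * (Real.sqrt (1 - μ ^ 2) * Z (n, k, false) ω + μ * Z (n, 0, false) ω)) +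
      Complex.ofReal (σ * (Real.sqrt (1 - μ ^ 2) * Z (n, k, true) ω + μ * Z (n, 0, true) ω)) *
        Complex.I)
    (gsq : Fin (K + 1) → Ωs → ℝ)
    (hgsq : ∀ k ω, gsq k ω = r₀ ^ (-α) * ∑ n : Fin N, ‖h n k ω‖ ^ 2) :
    ∀ k : Fin K,
      (∫ ω, gsq 0 ω * gsq k.succ ω ∂P = r₀ ^ (-(2 * α)) * σ ^ 4 * (N * μ ^ 2 + (N : ℝ) ^ 2)) ∧
      (∫ ω, gsq 0 ω ∂P = r₀ ^ (-α) * N * σ ^ 2) ∧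
      (∫ ω, gsq k.succ ω ∂P = r₀ ^ (-α) * N * σ ^ 2) ∧
      ((∫ ω, (gsq 0 ω) ^ 2 ∂P) - (∫ ω, gsq 0 ω ∂P) ^ 2 = r₀ ^ (-(2 * α)) * N * σ ^ 4) ∧
      ((∫ ω, (gsq k.succ ω) ^ 2 ∂P) - (∫ ω, gsq k.succ ω ∂P) ^ 2
        = r₀ ^ (-(2 * α)) * N * σ ^ 4) := by
  intro k
  obtain ⟨hμ0, hμ1⟩ := hμ
  have h0k : (0 : Fin (K + 1)) ≠ k.succ := (Fin.succ_ne_zero k).symm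
  set s : ℝ := Real.sqrt (1 - μ ^ 2) with hsdef
  have hs2 : s ^ 2 = 1 - μ ^ 2 := Real.sq_sqrt (by nlinarith)
  have hrr : r₀ ^ (-(2 * α)) = r₀ ^ (-α) * r₀ ^ (-α) := by
    rw [show -(2 * α) = -α + -α by ring, Real.rpow_add hr]
  -- base facts on the Z's
  have hZint : ∀ p (e : ℕ), Integrable (fun ω => Z p ω ^ e) P := by
    intro p e
    have h1 : Integrable (fun x : ℝ => x ^ e) (Measure.map (Z p) P) := by
      rw [hgauss p]; exact aux_gauss_integrable_pow e
    exact (integrable_map_measure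
      (by rw [hgauss p]; exact (measurable_id.pow_const e).aestronglyMeasurable)
      (hmeas p).aemeasurable).mp h1
  have hZm : ∀ p (e : ℕ), ∫ ω, Z p ω ^ e ∂P = ∫ x, x ^ e ∂(gaussianReal 0 (1/2)) := by
    intro p e
    rw [← hgauss p]
    exact (integral_map (hmeas p).aemeasurable
      (measurable_id.pow_const e).aestronglyMeasurable).symm
  have hZ1 : ∀ p, ∫ ω, Z p ω ^ (1 : ℕ) ∂P = 0 := fun p => by rw [hZm p 1, aux_gm1]
  have hZ2 : ∀ p, ∫ ω, Z p ω ^ (2 : ℕ) ∂P = 1/2 := fun p => by rw [hZm p 2, aux_gm2]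
  have hZ3 : ∀ p, ∫ ω, Z p ω ^ (3 : ℕ) ∂P = 0 := fun p => by rw [hZm p 3, aux_gm3]
  have hZ4 : ∀ p, ∫ ω, Z p ω ^ (4 : ℕ) ∂P = 3/4 := fun p => by rw [hZm p 4, aux_gm4]
  have hmul2 : ∀ p q, p ≠ q → ∀ e f : ℕ,
      Integrable (fun ω => Z p ω ^ e * Z q ω ^ f) P ∧
      ∫ ω, Z p ω ^ e * Z q ω ^ f ∂P = (∫ ω, Z p ω ^ e ∂P) * (∫ ω, Z q ω ^ f ∂P) := by
    intro p q hpq e f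
    have hind : IndepFun (fun ω => Z p ω ^ e) (fun ω => Z q ω ^ f) P :=
      (hindep.indepFun hpq).comp (measurable_id.pow_const e) (measurable_id.pow_const f)
    exact ⟨hind.integrable_mul (hZint p e) (hZint q f),
      hind.integral_fun_mul_eq_mul_integral (hZint p e).aestronglyMeasurable (hZint q f).aestronglyMeasurable⟩
  have hL2 : ∀ p q, p ≠ q →
      Integrable (fun ω => (s * Z p ω + μ * Z q ω) ^ 2) P ∧
      ∫ ω, (s * Z p ω + μ * Z q ω) ^ 2 ∂P = 1/2 := by
    intro p q hpq
    have hre : (fun ω => (s * Z p ω + μ * Z q ω) ^ 2)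
        = fun ω => s ^ 2 * Z p ω ^ 2 + ((2 * s * μ) * (Z p ω ^ 1 * Z q ω ^ 1)
            + μ ^ 2 * Z q ω ^ 2) := funext fun ω => by ring
    have hi2 : Integrable (fun ω => (2 * s * μ) * (Z p ω ^ 1 * Z q ω ^ 1)
        + μ ^ 2 * Z q ω ^ 2) P :=
      ((hmul2 p q hpq 1 1).1.const_mul _).add ((hZint q 2).const_mul _)
    constructor
    · rw [hre]; exact ((hZint p 2).const_mul _).add hi2
    · rw [hre, integral_add ((hZint p 2).const_mul _) hi2,
        integral_add ((hmul2 p q hpq 1 1).1.const_mul _) ((hZint q 2).const_mul _),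
        integral_const_mul, integral_const_mul, integral_const_mul,
        hZ2 p, hZ2 q, (hmul2 p q hpq 1 1).2, hZ1 p, hZ1 q]
      linear_combination (1/2) * hs2
  have hL4 : ∀ p q, p ≠ q →
      Integrable (fun ω => (s * Z p ω + μ * Z q ω) ^ 4) P ∧
      ∫ ω, (s * Z p ω + μ * Z q ω) ^ 4 ∂P = 3/4 := by
    intro p q hpq
    have hre : (fun ω => (s * Z p ω + μ * Z q ω) ^ 4)
        = fun ω => s ^ 4 * Z p ω ^ 4 + ((4 * s ^ 3 * μ) * (Z p ω ^ 3 * Z q ω ^ 1)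
            + ((6 * s ^ 2 * μ ^ 2) * (Z p ω ^ 2 * Z q ω ^ 2)
            + ((4 * s * μ ^ 3) * (Z p ω ^ 1 * Z q ω ^ 3)
            + μ ^ 4 * Z q ω ^ 4))) := funext fun ω => by ring
    have hiA : Integrable (fun ω => (4 * s * μ ^ 3) * (Z p ω ^ 1 * Z q ω ^ 3)
        + μ ^ 4 * Z q ω ^ 4) P :=
      ((hmul2 p q hpq 1 3).1.const_mul _).add ((hZint q 4).const_mul _)
    have hiB : Integrable (fun ω => (6 * s ^ 2 * μ ^ 2) * (Z p ω ^ 2 * Z q ω ^ 2)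
        + ((4 * s * μ ^ 3) * (Z p ω ^ 1 * Z q ω ^ 3) + μ ^ 4 * Z q ω ^ 4)) P :=
      ((hmul2 p q hpq 2 2).1.const_mul _).add hiA
    have hiC : Integrable (fun ω => (4 * s ^ 3 * μ) * (Z p ω ^ 3 * Z q ω ^ 1)
        + ((6 * s ^ 2 * μ ^ 2) * (Z p ω ^ 2 * Z q ω ^ 2)
          + ((4 * s * μ ^ 3) * (Z p ω ^ 1 * Z q ω ^ 3) + μ ^ 4 * Z q ω ^ 4))) P :=
      ((hmul2 p q hpq 3 1).1.const_mul _).add hiB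
    constructor
    · rw [hre]; exact ((hZint p 4).const_mul _).add hiC
    · rw [hre, integral_add ((hZint p 4).const_mul _) hiC,
        integral_add ((hmul2 p q hpq 3 1).1.const_mul _) hiB,
        integral_add ((hmul2 p q hpq 2 2).1.const_mul _) hiA,
        integral_add ((hmul2 p q hpq 1 3).1.const_mul _) ((hZint q 4).const_mul _),
        integral_const_mul, integral_const_mul, integral_const_mul, integral_const_mul,
        integral_const_mul,
        (hmul2 p q hpq 3 1).2, (hmul2 p q hpq 2 2).2, (hmul2 p q hpq 1 3).2,
        hZ4 p, hZ4 q, hZ2 p, hZ2 q, hZ1 p, hZ1 q, hZ3 p, hZ3 q]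
      linear_combination (3/4) * (s ^ 2 + μ ^ 2 + 1) * hs2
  -- distinctness of indices
  have hneK : ∀ (n m : Fin N) (b b' : Bool),
      ((n, k.succ, b) : Fin N × Fin (K + 1) × Bool) ≠ (m, 0, b') := by
    intro n m b b' hcon
    exact Fin.succ_ne_zero k (congrArg (fun x => x.2.1) hcon)
  have hneB : ∀ (n m : Fin N) (kk kk' : Fin (K + 1)),
      ((n, kk, false) : Fin N × Fin (K + 1) × Bool) ≠ (m, kk', true) := by
    intro n m kk kk' hcon
    exact Bool.false_ne_true (congrArg (fun x => x.2.2) hcon)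
  -- the basic blocks
  set F : Fin N → Ωs → ℝ := fun n ω => Z (n, 0, false) ω ^ 2 + Z (n, 0, true) ω ^ 2 with hFdef
  set G : Fin N → Ωs → ℝ := fun n ω =>
      (s * Z (n, k.succ, false) ω + μ * Z (n, 0, false) ω) ^ 2 +
      (s * Z (n, k.succ, true) ω + μ * Z (n, 0, true) ω) ^ 2 with hGdef
  have hg0 : ∀ ω, gsq 0 ω = r₀ ^ (-α) * σ ^ 2 * ∑ n : Fin N, F n ω := by
    intro ω
    rw [hgsq]
    have habs : ∀ n : Fin N, ‖h n 0 ω‖ ^ 2 = σ ^ 2 * F n ω := by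
      intro n
      rw [hh0 n ω, Complex.sq_norm, Complex.normSq_add_mul_I, hFdef]
      ring
    rw [show (∑ n : Fin N, ‖h n 0 ω‖ ^ 2) = ∑ n : Fin N, σ ^ 2 * F n ω from
      Finset.sum_congr rfl fun n _ => habs n, ← Finset.mul_sum]
    ring
  have hgk : ∀ ω, gsq k.succ ω = r₀ ^ (-α) * σ ^ 2 * ∑ n : Fin N, G n ω := by
    intro ω
    rw [hgsq]
    have habs : ∀ n : Fin N, ‖h n k.succ ω‖ ^ 2 = σ ^ 2 * G n ω := by
      intro n
      rw [hhk n k.succ (Fin.succ_ne_zero k) ω, Complex.sq_norm, Complex.normSq_add_mul_I, hGdef]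
      ring
    rw [show (∑ n : Fin N, ‖h n k.succ ω‖ ^ 2) = ∑ n : Fin N, σ ^ 2 * G n ω from
      Finset.sum_congr rfl fun n _ => habs n, ← Finset.mul_sum]
    ring
  have hFint : ∀ n : Fin N, Integrable (F n) P ∧ ∫ ω, F n ω ∂P = 1 := by
    intro n
    constructor
    · exact (hZint (n, 0, false) 2).add (hZint (n, 0, true) 2)
    · show (∫ ω, (Z (n, 0, false) ω ^ 2 + Z (n, 0, true) ω ^ 2) ∂P) = 1
      rw [integral_add (hZint _ 2) (hZint _ 2), hZ2, hZ2]
      norm_num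
  have hGint : ∀ n : Fin N, Integrable (G n) P ∧ ∫ ω, G n ω ∂P = 1 := by
    intro n
    have h1 := hL2 (n, k.succ, false) (n, 0, false) (hneK n n false false)
    have h2 := hL2 (n, k.succ, true) (n, 0, true) (hneK n n true true)
    constructor
    · exact h1.1.add h2.1
    · show (∫ ω, ((s * Z (n, k.succ, false) ω + μ * Z (n, 0, false) ω) ^ 2 +
          (s * Z (n, k.succ, true) ω + μ * Z (n, 0, true) ω) ^ 2) ∂P) = 1
      rw [integral_add h1.1 h2.1, h1.2, h2.2]
      norm_num
  have hmφF : Measurable fun x : ℝ × ℝ × ℝ × ℝ => x.1 ^ 2 + x.2.1 ^ 2 := by fun_prop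
  have hmφG : Measurable fun x : ℝ × ℝ × ℝ × ℝ =>
      (s * x.1 + μ * x.2.1) ^ 2 + (s * x.2.2.1 + μ * x.2.2.2) ^ 2 := by fun_prop
  have hmφA : Measurable fun x : ℝ × ℝ × ℝ × ℝ => x.1 ^ 2 := by fun_prop
  have hmφL : Measurable fun x : ℝ × ℝ × ℝ × ℝ => (s * x.1 + μ * x.2.1) ^ 2 := by fun_prop
  have hFF : ∀ n m : Fin N, Integrable (fun ω => F n ω * F m ω) P ∧
      ∫ ω, F n ω * F m ω ∂P = (if n = m then 2 else 1) := by
    intro n m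
    by_cases hnm : n = m
    · subst hnm
      rw [if_pos rfl]
      have hab : ((n, 0, false) : Fin N × Fin (K + 1) × Bool) ≠ (n, 0, true) := hneB n n 0 0
      have hre : (fun ω => F n ω * F n ω) = fun ω => Z (n, 0, false) ω ^ 4 +
          ((2 : ℝ) * (Z (n, 0, false) ω ^ 2 * Z (n, 0, true) ω ^ 2)
            + Z (n, 0, true) ω ^ 4) := funext fun ω => by rw [hFdef]; ring
      have hi : Integrable (fun ω => (2 : ℝ) * (Z (n, 0, false) ω ^ 2 * Z (n, 0, true) ω ^ 2)
          + Z (n, 0, true) ω ^ 4) P :=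
        ((hmul2 _ _ hab 2 2).1.const_mul _).add (hZint _ 4)
      constructor
      · rw [hre]; exact (hZint _ 4).add hi
      · rw [hre, integral_add (hZint _ 4) hi,
          integral_add ((hmul2 _ _ hab 2 2).1.const_mul _) (hZint _ 4),
          integral_const_mul, (hmul2 _ _ hab 2 2).2, hZ4, hZ4, hZ2, hZ2]
        norm_num
    · simp only [if_neg hnm]
      have hd : Disjoint
          ({(n, 0, false), (n, 0, true), (n, 0, false), (n, 0, true)} :
            Finset (Fin N × Fin (K + 1) × Bool))
          ({(m, 0, false), (m, 0, true), (m, 0, false), (m, 0, true)} :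
            Finset (Fin N × Fin (K + 1) × Bool)) := by
        simp [Finset.disjoint_left, Prod.ext_iff, hnm]
      have hind : IndepFun (F n) (F m) P :=
        aux_indep_comp4 hindep hmeas hd (φ := fun a b _ _ => a ^ 2 + b ^ 2)
          (ψ := fun a b _ _ => a ^ 2 + b ^ 2) hmφF hmφF
      refine ⟨hind.integrable_mul (hFint n).1 (hFint m).1, ?_⟩
      have hh2 := hind.integral_fun_mul_eq_mul_integral (hFint n).1.aestronglyMeasurable (hFint m).1.aestronglyMeasurable
      rw [(hFint n).2, (hFint m).2] at hh2
      exact hh2.trans (one_mul 1)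
  have hGG : ∀ n m : Fin N, Integrable (fun ω => G n ω * G m ω) P ∧
      ∫ ω, G n ω * G m ω ∂P = (if n = m then 2 else 1) := by
    intro n m
    by_cases hnm : n = m
    · subst hnm
      rw [if_pos rfl]
      have hUA : ((n, k.succ, false) : Fin N × Fin (K + 1) × Bool) ≠ (n, 0, false) :=
        hneK n n false false
      have hVB : ((n, k.succ, true) : Fin N × Fin (K + 1) × Bool) ≠ (n, 0, true) :=
        hneK n n true true
      have hdL : Disjoint
          ({(n, k.succ, false), (n, 0, false), (n, k.succ, false), (n, 0, false)} :
            Finset (Fin N × Fin (K + 1) × Bool))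
          ({(n, k.succ, true), (n, 0, true), (n, k.succ, true), (n, 0, true)} :
            Finset (Fin N × Fin (K + 1) × Bool)) := by
        simp [Finset.disjoint_left, Prod.ext_iff]
      have hindL : IndepFun
          (fun ω => (s * Z (n, k.succ, false) ω + μ * Z (n, 0, false) ω) ^ 2)
          (fun ω => (s * Z (n, k.succ, true) ω + μ * Z (n, 0, true) ω) ^ 2) P :=
        aux_indep_comp4 hindep hmeas hdL (φ := fun a b _ _ => (s * a + μ * b) ^ 2)
          (ψ := fun a b _ _ => (s * a + μ * b) ^ 2) hmφL hmφL
      have hiL1L2 : Integrable (fun ω =>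
          (s * Z (n, k.succ, false) ω + μ * Z (n, 0, false) ω) ^ 2 *
          (s * Z (n, k.succ, true) ω + μ * Z (n, 0, true) ω) ^ 2) P :=
        hindL.integrable_mul (hL2 _ _ hUA).1 (hL2 _ _ hVB).1
      have hintL1L2 : ∫ ω, (s * Z (n, k.succ, false) ω + μ * Z (n, 0, false) ω) ^ 2 *
          (s * Z (n, k.succ, true) ω + μ * Z (n, 0, true) ω) ^ 2 ∂P = 1/2 * (1/2) := by
        have hh2 := hindL.integral_fun_mul_eq_mul_integral (hL2 _ _ hUA).1.aestronglyMeasurable (hL2 _ _ hVB).1.aestronglyMeasurable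
        rw [(hL2 _ _ hUA).2, (hL2 _ _ hVB).2] at hh2
        exact hh2
      have hre : (fun ω => G n ω * G n ω) = fun ω =>
          (s * Z (n, k.succ, false) ω + μ * Z (n, 0, false) ω) ^ 4 +
          ((2 : ℝ) * ((s * Z (n, k.succ, false) ω + μ * Z (n, 0, false) ω) ^ 2 *
            (s * Z (n, k.succ, true) ω + μ * Z (n, 0, true) ω) ^ 2) +
           (s * Z (n, k.succ, true) ω + μ * Z (n, 0, true) ω) ^ 4) :=
        funext fun ω => by rw [hGdef]; ring
      have hi2 : Integrable (fun ω =>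
          (2 : ℝ) * ((s * Z (n, k.succ, false) ω + μ * Z (n, 0, false) ω) ^ 2 *
            (s * Z (n, k.succ, true) ω + μ * Z (n, 0, true) ω) ^ 2) +
          (s * Z (n, k.succ, true) ω + μ * Z (n, 0, true) ω) ^ 4) P :=
        (hiL1L2.const_mul _).add (hL4 _ _ hVB).1
      constructor
      · rw [hre]; exact (hL4 _ _ hUA).1.add hi2
      · rw [hre, integral_add (hL4 _ _ hUA).1 hi2,
          integral_add (hiL1L2.const_mul _) (hL4 _ _ hVB).1,
          integral_const_mul, hintL1L2, (hL4 _ _ hUA).2, (hL4 _ _ hVB).2]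
        norm_num
    · simp only [if_neg hnm]
      have hd : Disjoint
          ({(n, k.succ, false), (n, 0, false), (n, k.succ, true), (n, 0, true)} :
            Finset (Fin N × Fin (K + 1) × Bool))
          ({(m, k.succ, false), (m, 0, false), (m, k.succ, true), (m, 0, true)} :
            Finset (Fin N × Fin (K + 1) × Bool)) := by
        simp only [Finset.disjoint_left, Finset.mem_insert, Finset.mem_singleton, Prod.ext_iff]
        rintro ⟨a, b, c⟩ hx hy
        apply hnm
        have h1 : a = n := by tauto
        have h2 : a = m := by tauto
        rw [← h1, h2]
      have hind : IndepFun (G n) (G m) P :=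
        aux_indep_comp4 hindep hmeas hd
          (φ := fun a b c d => (s * a + μ * b) ^ 2 + (s * c + μ * d) ^ 2)
          (ψ := fun a b c d => (s * a + μ * b) ^ 2 + (s * c + μ * d) ^ 2) hmφG hmφG
      refine ⟨hind.integrable_mul (hGint n).1 (hGint m).1, ?_⟩
      have hh2 := hind.integral_fun_mul_eq_mul_integral (hGint n).1.aestronglyMeasurable (hGint m).1.aestronglyMeasurable
      rw [(hGint n).2, (hGint m).2] at hh2
      exact hh2.trans (one_mul 1)
  have hFG : ∀ n m : Fin N, Integrable (fun ω => F n ω * G m ω) P ∧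
      ∫ ω, F n ω * G m ω ∂P = (if n = m then 1 + μ ^ 2 else 1) := by
    intro n m
    by_cases hnm : n = m
    · subst hnm
      rw [if_pos rfl]
      have hAU : ((n, 0, false) : Fin N × Fin (K + 1) × Bool) ≠ (n, k.succ, false) :=
        (hneK n n false false).symm
      have hBV : ((n, 0, true) : Fin N × Fin (K + 1) × Bool) ≠ (n, k.succ, true) :=
        (hneK n n true true).symm
      have hUA : ((n, k.succ, false) : Fin N × Fin (K + 1) × Bool) ≠ (n, 0, false) :=
        hneK n n false false
      have hVB : ((n, k.succ, true) : Fin N × Fin (K + 1) × Bool) ≠ (n, 0, true) :=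
        hneK n n true true
      -- independent cross terms
      have hd2 : Disjoint
          ({(n, 0, false), (n, 0, false), (n, 0, false), (n, 0, false)} :
            Finset (Fin N × Fin (K + 1) × Bool))
          ({(n, k.succ, true), (n, 0, true), (n, k.succ, true), (n, 0, true)} :
            Finset (Fin N × Fin (K + 1) × Bool)) := by
        simp [Finset.disjoint_left, Prod.ext_iff]
      have hd3 : Disjoint
          ({(n, 0, true), (n, 0, true), (n, 0, true), (n, 0, true)} :
            Finset (Fin N × Fin (K + 1) × Bool))
          ({(n, k.succ, false), (n, 0, false), (n, k.succ, false), (n, 0, false)} :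
            Finset (Fin N × Fin (K + 1) × Bool)) := by
        simp [Finset.disjoint_left, Prod.ext_iff]
      have hind2 : IndepFun (fun ω => Z (n, 0, false) ω ^ 2)
          (fun ω => (s * Z (n, k.succ, true) ω + μ * Z (n, 0, true) ω) ^ 2) P :=
        aux_indep_comp4 hindep hmeas hd2 (φ := fun a _ _ _ => a ^ 2)
          (ψ := fun a b _ _ => (s * a + μ * b) ^ 2) hmφA hmφL
      have hind3 : IndepFun (fun ω => Z (n, 0, true) ω ^ 2)
          (fun ω => (s * Z (n, k.succ, false) ω + μ * Z (n, 0, false) ω) ^ 2) P :=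
        aux_indep_comp4 hindep hmeas hd3 (φ := fun a _ _ _ => a ^ 2)
          (ψ := fun a b _ _ => (s * a + μ * b) ^ 2) hmφA hmφL
      have hi_t2 : Integrable (fun ω => Z (n, 0, false) ω ^ 2 *
          (s * Z (n, k.succ, true) ω + μ * Z (n, 0, true) ω) ^ 2) P :=
        hind2.integrable_mul (hZint _ 2) (hL2 _ _ hVB).1
      have hi_t3 : Integrable (fun ω => Z (n, 0, true) ω ^ 2 *
          (s * Z (n, k.succ, false) ω + μ * Z (n, 0, false) ω) ^ 2) P :=
        hind3.integrable_mul (hZint _ 2) (hL2 _ _ hUA).1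
      have hint_t2 : ∫ ω, Z (n, 0, false) ω ^ 2 *
          (s * Z (n, k.succ, true) ω + μ * Z (n, 0, true) ω) ^ 2 ∂P = 1/2 * (1/2) := by
        have hh2 := hind2.integral_fun_mul_eq_mul_integral (hZint _ 2).aestronglyMeasurable (hL2 _ _ hVB).1.aestronglyMeasurable
        rw [hZ2, (hL2 _ _ hVB).2] at hh2
        exact hh2
      have hint_t3 : ∫ ω, Z (n, 0, true) ω ^ 2 *
          (s * Z (n, k.succ, false) ω + μ * Z (n, 0, false) ω) ^ 2 ∂P = 1/2 * (1/2) := by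
        have hh2 := hind3.integral_fun_mul_eq_mul_integral (hZint _ 2).aestronglyMeasurable (hL2 _ _ hUA).1.aestronglyMeasurable
        rw [hZ2, (hL2 _ _ hUA).2] at hh2
        exact hh2
      -- expanded terms
      have hi_t1 : Integrable (fun ω =>
          s ^ 2 * (Z (n, 0, false) ω ^ 2 * Z (n, k.succ, false) ω ^ 2) +
          ((2 * s * μ) * (Z (n, 0, false) ω ^ 3 * Z (n, k.succ, false) ω ^ 1) +
            μ ^ 2 * Z (n, 0, false) ω ^ 4)) P :=
        ((hmul2 _ _ hAU 2 2).1.const_mul _).add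
          (((hmul2 _ _ hAU 3 1).1.const_mul _).add ((hZint _ 4).const_mul _))
      have hi_t4 : Integrable (fun ω =>
          s ^ 2 * (Z (n, 0, true) ω ^ 2 * Z (n, k.succ, true) ω ^ 2) +
          ((2 * s * μ) * (Z (n, 0, true) ω ^ 3 * Z (n, k.succ, true) ω ^ 1) +
            μ ^ 2 * Z (n, 0, true) ω ^ 4)) P :=
        ((hmul2 _ _ hBV 2 2).1.const_mul _).add
          (((hmul2 _ _ hBV 3 1).1.const_mul _).add ((hZint _ 4).const_mul _))
      have hi_t1b : Integrable (fun ω =>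
          (2 * s * μ) * (Z (n, 0, false) ω ^ 3 * Z (n, k.succ, false) ω ^ 1) +
            μ ^ 2 * Z (n, 0, false) ω ^ 4) P :=
        ((hmul2 _ _ hAU 3 1).1.const_mul _).add ((hZint _ 4).const_mul _)
      have hint_t1 : ∫ ω, (s ^ 2 * (Z (n, 0, false) ω ^ 2 * Z (n, k.succ, false) ω ^ 2) +
          ((2 * s * μ) * (Z (n, 0, false) ω ^ 3 * Z (n, k.succ, false) ω ^ 1) +
            μ ^ 2 * Z (n, 0, false) ω ^ 4)) ∂P = s ^ 2 * (1/2 * (1/2)) + μ ^ 2 * (3/4) := by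
        rw [integral_add ((hmul2 _ _ hAU 2 2).1.const_mul _) hi_t1b,
          integral_add ((hmul2 _ _ hAU 3 1).1.const_mul _) ((hZint _ 4).const_mul _),
          integral_const_mul, integral_const_mul, integral_const_mul,
          (hmul2 _ _ hAU 2 2).2, (hmul2 _ _ hAU 3 1).2, hZ2, hZ2, hZ3, hZ1, hZ4]
        ring
      have hi_t4b : Integrable (fun ω =>
          (2 * s * μ) * (Z (n, 0, true) ω ^ 3 * Z (n, k.succ, true) ω ^ 1) +
            μ ^ 2 * Z (n, 0, true) ω ^ 4) P :=
        ((hmul2 _ _ hBV 3 1).1.const_mul _).add ((hZint _ 4).const_mul _)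
      have hint_t4 : ∫ ω, (s ^ 2 * (Z (n, 0, true) ω ^ 2 * Z (n, k.succ, true) ω ^ 2) +
          ((2 * s * μ) * (Z (n, 0, true) ω ^ 3 * Z (n, k.succ, true) ω ^ 1) +
            μ ^ 2 * Z (n, 0, true) ω ^ 4)) ∂P = s ^ 2 * (1/2 * (1/2)) + μ ^ 2 * (3/4) := by
        rw [integral_add ((hmul2 _ _ hBV 2 2).1.const_mul _) hi_t4b,
          integral_add ((hmul2 _ _ hBV 3 1).1.const_mul _) ((hZint _ 4).const_mul _),
          integral_const_mul, integral_const_mul, integral_const_mul,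
          (hmul2 _ _ hBV 2 2).2, (hmul2 _ _ hBV 3 1).2, hZ2, hZ2, hZ3, hZ1, hZ4]
        ring
      have hre : (fun ω => F n ω * G n ω) = fun ω =>
          (s ^ 2 * (Z (n, 0, false) ω ^ 2 * Z (n, k.succ, false) ω ^ 2) +
            ((2 * s * μ) * (Z (n, 0, false) ω ^ 3 * Z (n, k.succ, false) ω ^ 1) +
              μ ^ 2 * Z (n, 0, false) ω ^ 4)) +
          ((Z (n, 0, false) ω ^ 2 * (s * Z (n, k.succ, true) ω + μ * Z (n, 0, true) ω) ^ 2) +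
            ((Z (n, 0, true) ω ^ 2 * (s * Z (n, k.succ, false) ω + μ * Z (n, 0, false) ω) ^ 2) +
              (s ^ 2 * (Z (n, 0, true) ω ^ 2 * Z (n, k.succ, true) ω ^ 2) +
                ((2 * s * μ) * (Z (n, 0, true) ω ^ 3 * Z (n, k.succ, true) ω ^ 1) +
                  μ ^ 2 * Z (n, 0, true) ω ^ 4)))) :=
        funext fun ω => by rw [hFdef, hGdef]; ring
      have hi_s34 : Integrable (fun ω =>
          (Z (n, 0, true) ω ^ 2 * (s * Z (n, k.succ, false) ω + μ * Z (n, 0, false) ω) ^ 2) +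
          (s ^ 2 * (Z (n, 0, true) ω ^ 2 * Z (n, k.succ, true) ω ^ 2) +
            ((2 * s * μ) * (Z (n, 0, true) ω ^ 3 * Z (n, k.succ, true) ω ^ 1) +
              μ ^ 2 * Z (n, 0, true) ω ^ 4))) P := hi_t3.add hi_t4
      have hi_s234 : Integrable (fun ω =>
          (Z (n, 0, false) ω ^ 2 * (s * Z (n, k.succ, true) ω + μ * Z (n, 0, true) ω) ^ 2) +
          ((Z (n, 0, true) ω ^ 2 * (s * Z (n, k.succ, false) ω + μ * Z (n, 0, false) ω) ^ 2) +
            (s ^ 2 * (Z (n, 0, true) ω ^ 2 * Z (n, k.succ, true) ω ^ 2) +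
              ((2 * s * μ) * (Z (n, 0, true) ω ^ 3 * Z (n, k.succ, true) ω ^ 1) +
                μ ^ 2 * Z (n, 0, true) ω ^ 4)))) P := hi_t2.add hi_s34
      constructor
      · rw [hre]
        exact hi_t1.add hi_s234
      · rw [hre, integral_add hi_t1 hi_s234,
          integral_add hi_t2 hi_s34, integral_add hi_t3 hi_t4,
          hint_t1, hint_t2, hint_t3, hint_t4]
        linear_combination (1/2) * hs2
    · simp only [if_neg hnm]
      have hd : Disjoint
          ({(n, 0, false), (n, 0, true), (n, 0, false), (n, 0, true)} :
            Finset (Fin N × Fin (K + 1) × Bool))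
          ({(m, k.succ, false), (m, 0, false), (m, k.succ, true), (m, 0, true)} :
            Finset (Fin N × Fin (K + 1) × Bool)) := by
        simp only [Finset.disjoint_left, Finset.mem_insert, Finset.mem_singleton, Prod.ext_iff]
        rintro ⟨a, b, c⟩ hx hy
        apply hnm
        have h1 : a = n := by tauto
        have h2 : a = m := by tauto
        rw [← h1, h2]
      have hind : IndepFun (F n) (G m) P :=
        aux_indep_comp4 hindep hmeas hd
          (φ := fun a b _ _ => a ^ 2 + b ^ 2)
          (ψ := fun a b c d => (s * a + μ * b) ^ 2 + (s * c + μ * d) ^ 2) hmφF hmφG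
      refine ⟨hind.integrable_mul (hFint n).1 (hGint m).1, ?_⟩
      have hh2 := hind.integral_fun_mul_eq_mul_integral (hFint n).1.aestronglyMeasurable (hGint m).1.aestronglyMeasurable
      rw [(hFint n).2, (hGint m).2] at hh2
      exact hh2.trans (one_mul 1)
  -- row sums of if-then-else
  have hrow : ∀ (a : ℝ) (n : Fin N), (∑ m : Fin N, if n = m then a else (1:ℝ)) = a - 1 + N := by
    intro a n
    have hre : (fun m : Fin N => if n = m then a else (1:ℝ))
        = fun m => (if n = m then a - 1 else 0) + 1 := funext fun m => by
      by_cases hm : n = m <;> simp [hm]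
    rw [hre, Finset.sum_add_distrib, Finset.sum_ite_eq, if_pos (Finset.mem_univ n),
      Finset.sum_const, Finset.card_univ, Fintype.card_fin, nsmul_eq_mul, mul_one]
  -- the five integrals
  have hIg0 : ∫ ω, gsq 0 ω ∂P = r₀ ^ (-α) * N * σ ^ 2 := by
    simp only [hg0]
    rw [integral_const_mul, integral_finset_sum _ (fun n _ => (hFint n).1),
      show (∑ n : Fin N, ∫ ω, F n ω ∂P) = ∑ _n : Fin N, (1:ℝ) from
        Finset.sum_congr rfl fun n _ => (hFint n).2,
      Finset.sum_const, Finset.card_univ, Fintype.card_fin, nsmul_eq_mul, mul_one]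
    ring
  have hIgk : ∫ ω, gsq k.succ ω ∂P = r₀ ^ (-α) * N * σ ^ 2 := by
    simp only [hgk]
    rw [integral_const_mul, integral_finset_sum _ (fun n _ => (hGint n).1),
      show (∑ n : Fin N, ∫ ω, G n ω ∂P) = ∑ _n : Fin N, (1:ℝ) from
        Finset.sum_congr rfl fun n _ => (hGint n).2,
      Finset.sum_const, Finset.card_univ, Fintype.card_fin, nsmul_eq_mul, mul_one]
    ring
  have hcross : ∫ ω, gsq 0 ω * gsq k.succ ω ∂P
      = r₀ ^ (-(2*α)) * σ ^ 4 * (N * μ ^ 2 + (N:ℝ) ^ 2) := by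
    have hpt : ∀ ω, gsq 0 ω * gsq k.succ ω
        = (r₀ ^ (-α) * r₀ ^ (-α) * σ ^ 4) * ∑ n : Fin N, ∑ m : Fin N, F n ω * G m ω := by
      intro ω
      rw [hg0 ω, hgk ω, show (r₀ ^ (-α) * σ ^ 2 * ∑ n : Fin N, F n ω) *
          (r₀ ^ (-α) * σ ^ 2 * ∑ n : Fin N, G n ω)
        = (r₀ ^ (-α) * r₀ ^ (-α) * σ ^ 4) *
          ((∑ n : Fin N, F n ω) * (∑ n : Fin N, G n ω)) from by ring,
        Finset.sum_mul_sum]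
    simp only [hpt]
    rw [integral_const_mul,
      integral_finset_sum _ (fun n _ => integrable_finset_sum _ fun m _ => (hFG n m).1),
      show (∑ n : Fin N, ∫ ω, ∑ m : Fin N, F n ω * G m ω ∂P)
        = ∑ _n : Fin N, ((1 + μ ^ 2) - 1 + (N:ℝ)) from Finset.sum_congr rfl fun n _ => by
          rw [integral_finset_sum _ (fun m _ => (hFG n m).1),
            show (∑ m : Fin N, ∫ ω, F n ω * G m ω ∂P)
              = ∑ m : Fin N, (if n = m then 1 + μ ^ 2 else (1:ℝ)) from
              Finset.sum_congr rfl fun m _ => (hFG n m).2, hrow (1 + μ ^ 2) n],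
      Finset.sum_const, Finset.card_univ, Fintype.card_fin, nsmul_eq_mul, hrr]
    ring
  have hIg0sq : ∫ ω, gsq 0 ω ^ 2 ∂P = r₀ ^ (-(2*α)) * σ ^ 4 * ((N:ℝ) + (N:ℝ) ^ 2) := by
    have hpt : ∀ ω, gsq 0 ω ^ 2
        = (r₀ ^ (-α) * r₀ ^ (-α) * σ ^ 4) * ∑ n : Fin N, ∑ m : Fin N, F n ω * F m ω := by
      intro ω
      rw [hg0 ω, show (r₀ ^ (-α) * σ ^ 2 * ∑ n : Fin N, F n ω) ^ 2
        = (r₀ ^ (-α) * r₀ ^ (-α) * σ ^ 4) *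
          ((∑ n : Fin N, F n ω) * (∑ n : Fin N, F n ω)) from by ring,
        Finset.sum_mul_sum]
    simp only [hpt]
    rw [integral_const_mul,
      integral_finset_sum _ (fun n _ => integrable_finset_sum _ fun m _ => (hFF n m).1),
      show (∑ n : Fin N, ∫ ω, ∑ m : Fin N, F n ω * F m ω ∂P)
        = ∑ _n : Fin N, ((2:ℝ) - 1 + (N:ℝ)) from Finset.sum_congr rfl fun n _ => by
          rw [integral_finset_sum _ (fun m _ => (hFF n m).1),
            show (∑ m : Fin N, ∫ ω, F n ω * F m ω ∂P)
              = ∑ m : Fin N, (if n = m then (2:ℝ) else (1:ℝ)) from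
              Finset.sum_congr rfl fun m _ => (hFF n m).2, hrow 2 n],
      Finset.sum_const, Finset.card_univ, Fintype.card_fin, nsmul_eq_mul, hrr]
    ring
  have hIgksq : ∫ ω, gsq k.succ ω ^ 2 ∂P = r₀ ^ (-(2*α)) * σ ^ 4 * ((N:ℝ) + (N:ℝ) ^ 2) := by
    have hpt : ∀ ω, gsq k.succ ω ^ 2
        = (r₀ ^ (-α) * r₀ ^ (-α) * σ ^ 4) * ∑ n : Fin N, ∑ m : Fin N, G n ω * G m ω := by
      intro ω
      rw [hgk ω, show (r₀ ^ (-α) * σ ^ 2 * ∑ n : Fin N, G n ω) ^ 2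
        = (r₀ ^ (-α) * r₀ ^ (-α) * σ ^ 4) *
          ((∑ n : Fin N, G n ω) * (∑ n : Fin N, G n ω)) from by ring,
        Finset.sum_mul_sum]
    simp only [hpt]
    rw [integral_const_mul,
      integral_finset_sum _ (fun n _ => integrable_finset_sum _ fun m _ => (hGG n m).1),
      show (∑ n : Fin N, ∫ ω, ∑ m : Fin N, G n ω * G m ω ∂P)
        = ∑ _n : Fin N, ((2:ℝ) - 1 + (N:ℝ)) from Finset.sum_congr rfl fun n _ => by
          rw [integral_finset_sum _ (fun m _ => (hGG n m).1),
            show (∑ m : Fin N, ∫ ω, G n ω * G m ω ∂P)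
              = ∑ m : Fin N, (if n = m then (2:ℝ) else (1:ℝ)) from
              Finset.sum_congr rfl fun m _ => (hGG n m).2, hrow 2 n],
      Finset.sum_const, Finset.card_univ, Fintype.card_fin, nsmul_eq_mul, hrr]
    ring
  refine ⟨hcross, hIg0, hIgk, ?_, ?_⟩
  · rw [hIg0sq, hIg0, hrr]; ring
  · rw [hIgksq, hIgk, hrr]; ring
end

section
/- Consider the signal channel model with parameters N, K, σ, μ, r₀, α. For every 1 ≤ k ≤ K, the Pearson correlation coefficient between |g₀|² and |g_k|², namely (E[|g₀|²|g_k|²] − E[|g₀|²]E[|g_k|²]) / √(Var[|g₀|²]·Var[|g_k|²]), equals μ². -/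
open MeasureTheory ProbabilityTheory Real Set

namespace Stmt2Aux

noncomputable def gpdf (x : ℝ) : ℝ := (Real.sqrt π)⁻¹ * Real.exp (-x^2)

lemma gpdf_nonneg (x : ℝ) : 0 ≤ gpdf x := by unfold gpdf; positivity

lemma gpdf_meas : Measurable gpdf := by unfold gpdf; fun_prop

lemma gpdf_toNNReal_meas : Measurable fun x => (gpdf x).toNNReal :=
  measurable_real_toNNReal.comp gpdf_meas

lemma gaussianPDF_eq (x : ℝ) : gaussianPDF 0 (1/2) x = ENNReal.ofReal (gpdf x) := by
  unfold gaussianPDF gaussianPDFReal gpdf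
  norm_num
  congr 2
  have h2 : Real.sqrt 2 ≠ 0 := by positivity
  rw [mul_left_comm, ENNReal.mul_inv_cancel (ENNReal.ofReal_pos.mpr (by positivity)).ne'
    ENNReal.ofReal_ne_top, mul_one]

lemma integral_gaussianReal_eq (f : ℝ → ℝ) :
    ∫ x, f x ∂(gaussianReal 0 (1/2)) = ∫ x, gpdf x * f x := by
  rw [gaussianReal_of_var_ne_zero 0 (by norm_num)]
  have h1 : gaussianPDF 0 (1/2) = fun x => (((gpdf x).toNNReal : NNReal) : ENNReal) := by
    funext x; rw [gaussianPDF_eq]; rfl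
  rw [h1, integral_withDensity_eq_integral_smul gpdf_toNNReal_meas]
  congr 1; funext x
  rw [NNReal.smul_def, Real.coe_toNNReal _ (gpdf_nonneg x), smul_eq_mul]

lemma integrable_gaussianReal_iff (f : ℝ → ℝ) :
    Integrable f (gaussianReal 0 (1/2)) ↔ Integrable (fun x => gpdf x * f x) := by
  rw [gaussianReal_of_var_ne_zero 0 (by norm_num)]
  have h1 : gaussianPDF 0 (1/2) = fun x => (((gpdf x).toNNReal : NNReal) : ENNReal) := by
    funext x; rw [gaussianPDF_eq]; rfl
  rw [h1, integrable_withDensity_iff_integrable_smul gpdf_toNNReal_meas]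
  constructor <;> intro h <;> refine h.congr (Filter.Eventually.of_forall fun x => ?_)
  · show (gpdf x).toNNReal • f x = gpdf x * f x
    rw [NNReal.smul_def, Real.coe_toNNReal _ (gpdf_nonneg x), smul_eq_mul]
  · show gpdf x * f x = (gpdf x).toNNReal • f x
    rw [NNReal.smul_def, Real.coe_toNNReal _ (gpdf_nonneg x), smul_eq_mul]


lemma integrable_pow_exp (n : ℕ) : Integrable fun x : ℝ => x ^ n * Real.exp (-x^2) := by
  have h := integrable_rpow_mul_exp_neg_mul_sq (b := 1) one_pos (s := (n : ℝ))
    (lt_of_lt_of_le neg_one_lt_zero (Nat.cast_nonneg n))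
  simpa [Real.rpow_natCast, neg_one_mul] using h

lemma integral_pow_exp_odd {n : ℕ} (hn : Odd n) :
    ∫ x : ℝ, x ^ n * Real.exp (-x^2) = 0 := by
  have h := integral_neg_eq_self (fun x : ℝ => x ^ n * Real.exp (-x^2)) (volume : Measure ℝ)
  simp only [neg_sq, hn.neg_pow, neg_mul, integral_neg] at h
  linarith

lemma integral_pow_exp_even (n : ℕ) :
    ∫ x : ℝ, x ^ (2*n) * Real.exp (-x^2) = Real.Gamma ((2*n+1)/2) := by
  have habs : (fun x : ℝ => x ^ (2*n) * Real.exp (-x^2))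
      = fun x : ℝ => |x| ^ (2*n) * Real.exp (-|x|^2) := by
    funext x
    simp only [pow_mul, sq_abs]
  rw [habs,
    show (∫ x : ℝ, |x| ^ (2*n) * Real.exp (-|x|^2))
        = 2 * ∫ x in Ioi (0:ℝ), x ^ (2*n) * Real.exp (-x^2) from
      integral_comp_abs (f := fun t : ℝ => t ^ (2*n) * Real.exp (-t^2))]
  have h := integral_rpow_mul_exp_neg_mul_rpow (p := 2) (q := ((2*n : ℕ) : ℝ)) (b := 1)
    two_pos (lt_of_lt_of_le neg_one_lt_zero (Nat.cast_nonneg _)) one_pos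
  rw [show ∫ x in Ioi (0:ℝ), x ^ (2*n) * Real.exp (-x^2)
      = ∫ x in Ioi (0:ℝ), x ^ ((2*n : ℕ) : ℝ) * Real.exp (-1 * x ^ (2:ℝ)) from by
    refine setIntegral_congr_fun measurableSet_Ioi fun x hx => ?_
    rw [Real.rpow_natCast, Real.rpow_two, neg_one_mul], h]
  rw [one_rpow]
  push_cast
  ring

lemma integral_pow_exp_two : ∫ x : ℝ, x ^ 2 * Real.exp (-x^2) = Real.sqrt π / 2 := by
  have h := integral_pow_exp_even 1
  rw [show (2*1 : ℕ) = 2 from rfl] at h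
  rw [h, show ((2*(1:ℕ)+1 : ℝ))/2 = 1/2 + 1 from by push_cast; ring,
    Real.Gamma_add_one (by norm_num), Real.Gamma_one_half_eq]
  ring

lemma integral_pow_exp_four : ∫ x : ℝ, x ^ 4 * Real.exp (-x^2) = 3 * Real.sqrt π / 4 := by
  have h := integral_pow_exp_even 2
  rw [show (2*2 : ℕ) = 4 from rfl] at h
  rw [h, show ((2*(2:ℕ)+1 : ℝ))/2 = (1/2 + 1) + 1 from by push_cast; ring,
    Real.Gamma_add_one (by norm_num), Real.Gamma_add_one (by norm_num),
    Real.Gamma_one_half_eq]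
  ring

lemma integral_pow_exp_zero : ∫ x : ℝ, x ^ 0 * Real.exp (-x^2) = Real.sqrt π := by
  have h := integral_gaussian 1
  simp only [neg_one_mul, div_one] at h
  simpa using h

lemma sqrt_pi_pos : (0:ℝ) < Real.sqrt π := Real.sqrt_pos.mpr Real.pi_pos

/-- moments of the standard `gaussianReal 0 (1/2)` -/
lemma integral_pow_gaussianReal (n : ℕ) :
    ∫ x, x ^ n ∂(gaussianReal 0 (1/2))
      = (Real.sqrt π)⁻¹ * ∫ x : ℝ, x ^ n * Real.exp (-x^2) := by
  rw [integral_gaussianReal_eq]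
  rw [← integral_const_mul]
  congr 1; funext x; unfold gpdf; ring

lemma integrable_pow_gaussianReal (n : ℕ) :
    Integrable (fun x => x ^ n) (gaussianReal 0 (1/2)) := by
  rw [integrable_gaussianReal_iff]
  have h := (integrable_pow_exp n).const_mul (Real.sqrt π)⁻¹
  refine h.congr (Filter.Eventually.of_forall fun x => ?_)
  unfold gpdf; ring

lemma gauss_moment_zero : ∫ x, x ^ 0 ∂(gaussianReal 0 (1/2)) = 1 := by
  rw [integral_pow_gaussianReal, integral_pow_exp_zero,
    inv_mul_cancel₀ sqrt_pi_pos.ne']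

lemma gauss_moment_one : ∫ x, x ^ 1 ∂(gaussianReal 0 (1/2)) = 0 := by
  rw [integral_pow_gaussianReal, integral_pow_exp_odd (by norm_num : Odd 1), mul_zero]

lemma gauss_moment_two : ∫ x, x ^ 2 ∂(gaussianReal 0 (1/2)) = 1/2 := by
  rw [integral_pow_gaussianReal, integral_pow_exp_two]
  field_simp

lemma gauss_moment_three : ∫ x, x ^ 3 ∂(gaussianReal 0 (1/2)) = 0 := by
  rw [integral_pow_gaussianReal, integral_pow_exp_odd ⟨1, by norm_num⟩, mul_zero]

lemma gauss_moment_four : ∫ x, x ^ 4 ∂(gaussianReal 0 (1/2)) = 3/4 := by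
  rw [integral_pow_gaussianReal, integral_pow_exp_four]
  rw [inv_mul_eq_div, div_eq_iff sqrt_pi_pos.ne']
  ring


variable {Ω : Type*} [MeasurableSpace Ω] {P : Measure Ω}

lemma moment_eq {X : Ω → ℝ} (hX : Measurable X)
    (hg : Measure.map X P = gaussianReal 0 (1/2)) (n : ℕ) :
    ∫ ω, X ω ^ n ∂P = ∫ x, x ^ n ∂(gaussianReal 0 (1/2)) := by
  have hf : AEStronglyMeasurable (fun x : ℝ => x ^ n) (Measure.map X P) :=
    (by fun_prop : Measurable fun x : ℝ => x ^ n).aestronglyMeasurable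
  rw [← hg, integral_map hX.aemeasurable hf]

lemma integrable_moment {X : Ω → ℝ} (hX : Measurable X)
    (hg : Measure.map X P = gaussianReal 0 (1/2)) (n : ℕ) :
    Integrable (fun ω => X ω ^ n) P := by
  have h := integrable_pow_gaussianReal n
  rw [← hg] at h
  have hf : AEStronglyMeasurable (fun x : ℝ => x ^ n) (Measure.map X P) :=
    (by fun_prop : Measurable fun x : ℝ => x ^ n).aestronglyMeasurable
  exact (integrable_map_measure hf hX.aemeasurable).mp h

lemma integral_comb3 {f g h : Ω → ℝ} (hf : Integrable f P) (hg : Integrable g P)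
    (hh : Integrable h P) (a b c : ℝ) :
    ∫ ω, (a * f ω + b * g ω + c * h ω) ∂P
      = a * (∫ ω, f ω ∂P) + b * (∫ ω, g ω ∂P) + c * (∫ ω, h ω ∂P) := by
  have h1 : Integrable (fun ω => a * f ω) P := hf.const_mul a
  have h2 : Integrable (fun ω => b * g ω) P := hg.const_mul b
  have h3 : Integrable (fun ω => c * h ω) P := hh.const_mul c
  have h12 : Integrable (fun ω => a * f ω + b * g ω) P := h1.add h2
  rw [integral_add h12 h3, integral_add h1 h2, integral_const_mul, integral_const_mul,
    integral_const_mul]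

lemma integral_comb5 {f1 f2 f3 f4 f5 : Ω → ℝ} (h1 : Integrable f1 P) (h2 : Integrable f2 P)
    (h3 : Integrable f3 P) (h4 : Integrable f4 P) (h5 : Integrable f5 P) (a1 a2 a3 a4 a5 : ℝ) :
    ∫ ω, (a1 * f1 ω + a2 * f2 ω + a3 * f3 ω + a4 * f4 ω + a5 * f5 ω) ∂P
      = a1 * (∫ ω, f1 ω ∂P) + a2 * (∫ ω, f2 ω ∂P) + a3 * (∫ ω, f3 ω ∂P)
        + a4 * (∫ ω, f4 ω ∂P) + a5 * (∫ ω, f5 ω ∂P) := by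
  have g1 : Integrable (fun ω => a1 * f1 ω) P := h1.const_mul a1
  have g2 : Integrable (fun ω => a2 * f2 ω) P := h2.const_mul a2
  have g3 : Integrable (fun ω => a3 * f3 ω) P := h3.const_mul a3
  have g4 : Integrable (fun ω => a4 * f4 ω) P := h4.const_mul a4
  have g5 : Integrable (fun ω => a5 * f5 ω) P := h5.const_mul a5
  have g12 : Integrable (fun ω => a1 * f1 ω + a2 * f2 ω) P := g1.add g2
  have g123 : Integrable (fun ω => a1 * f1 ω + a2 * f2 ω + a3 * f3 ω) P := g12.add g3
  have g1234 : Integrable (fun ω => a1 * f1 ω + a2 * f2 ω + a3 * f3 ω + a4 * f4 ω) P :=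
    g123.add g4
  rw [integral_add g1234 g5, integral_add g123 g4, integral_add g12 g3, integral_add g1 g2,
    integral_const_mul, integral_const_mul, integral_const_mul, integral_const_mul,
    integral_const_mul]


def pu (N K : ℕ) (j : Fin N × Bool) : Fin N × Fin (K + 1) × Bool := (j.1, 0, j.2)

def pv (N K : ℕ) (kk : Fin (K + 1)) (j : Fin N × Bool) : Fin N × Fin (K + 1) × Bool :=
  (j.1, kk, j.2)

lemma pu_ne_pu {N K : ℕ} {j j' : Fin N × Bool} (h : j ≠ j') : pu N K j ≠ pu N K j' := by
  simp only [pu, ne_eq, Prod.ext_iff, not_and]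
  intro h1 _ h2
  exact h (Prod.ext h1 h2)

lemma pv_ne_pv {N K : ℕ} {kk : Fin (K + 1)} {j j' : Fin N × Bool} (h : j ≠ j') :
    pv N K kk j ≠ pv N K kk j' := by
  simp only [pv, ne_eq, Prod.ext_iff, not_and]
  intro h1 _ h2
  exact h (Prod.ext h1 h2)

lemma pu_ne_pv {N K : ℕ} {kk : Fin (K + 1)} (hkk : kk ≠ 0) (j j' : Fin N × Bool) :
    pu N K j ≠ pv N K kk j' := by
  simp only [pu, pv, ne_eq, Prod.ext_iff, not_and]
  intro _ h2
  exact absurd h2.symm hkk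

lemma sum_quarter_add {γ : Type*} [Fintype γ] [DecidableEq γ] (t : ℝ) (j : γ) :
    ∑ j' : γ, (1/4 + if j = j' then t else 0) = (Fintype.card γ : ℝ)/4 + t := by
  rw [Finset.sum_add_distrib, Finset.sum_const, Finset.sum_ite_eq, if_pos (Finset.mem_univ j),
    Finset.card_univ, nsmul_eq_mul]
  ring

end Stmt2Aux


/-- in the correlated signal channel model with MRT precoding, for every
port `1 ≤ k ≤ K`, the Pearson correlation coefficient between `|g₀|²` and `|g_k|²`,
namely `(E[|g₀|²|g_k|²] − E[|g₀|²]E[|g_k|²]) / √(Var[|g₀|²]·Var[|g_k|²])`, equals `μ²`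
(variances written as `E[X²] − E[X]²`). -/
theorem stmt_2
    {Ωs : Type*} [MeasurableSpace Ωs] (P : Measure Ωs) [IsProbabilityMeasure P]
    (N K : ℕ) (hN : 1 ≤ N) (hK : 1 ≤ K)
    (σ μ r₀ α : ℝ) (hσ : 0 < σ) (hμ : μ ∈ Set.Ioo (0 : ℝ) 1) (hr : 0 < r₀) (hα : 0 < α)
    (Z : Fin N × Fin (K + 1) × Bool → Ωs → ℝ)
    (hmeas : ∀ p, Measurable (Z p))
    (hindep : iIndepFun Z P)
    (hgauss : ∀ p, Measure.map (Z p) P = gaussianReal 0 (1 / 2))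
    (h : Fin N → Fin (K + 1) → Ωs → ℂ)
    (hh0 : ∀ n ω, h n 0 ω = Complex.ofReal (σ * Z (n, 0, false) ω) +
      Complex.ofReal (σ * Z (n, 0, true) ω) * Complex.I)
    (hhk : ∀ n (k : Fin (K + 1)), k ≠ 0 → ∀ ω, h n k ω =
      Complex.ofReal (σ * (Real.sqrt (1 - μ ^ 2) * Z (n, k, false) ω + μ * Z (n, 0, false) ω)) +
      Complex.ofReal (σ * (Real.sqrt (1 - μ ^ 2) * Z (n, k, true) ω + μ * Z (n, 0, true) ω)) *
        Complex.I)
    (gsq : Fin (K + 1) → Ωs → ℝ)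
    (hgsq : ∀ k ω, gsq k ω = r₀ ^ (-α) * ∑ n : Fin N, ‖h n k ω‖ ^ 2) :
    ∀ k : Fin K,
      ((∫ ω, gsq 0 ω * gsq k.succ ω ∂P) - (∫ ω, gsq 0 ω ∂P) * (∫ ω, gsq k.succ ω ∂P)) /
        Real.sqrt (((∫ ω, (gsq 0 ω) ^ 2 ∂P) - (∫ ω, gsq 0 ω ∂P) ^ 2) *
          ((∫ ω, (gsq k.succ ω) ^ 2 ∂P) - (∫ ω, gsq k.succ ω ∂P) ^ 2))
        = μ ^ 2 := by
  classical
  obtain ⟨hμ0, hμ1⟩ := hμ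
  intro k
  set s : ℝ := Real.sqrt (1 - μ ^ 2) with hs_def
  have hs2 : s ^ 2 = 1 - μ ^ 2 := by
    rw [hs_def]; exact Real.sq_sqrt (by nlinarith)
  have hkk : k.succ ≠ (0 : Fin (K + 1)) := Fin.succ_ne_zero k
  set c : ℝ := r₀ ^ (-α) * σ ^ 2 with hc_def
  have hc : 0 < c := by
    have h1 : 0 < r₀ ^ (-α) := Real.rpow_pos_of_pos hr _
    rw [hc_def]; positivity
  have hNpos : (0:ℝ) < (N:ℝ) := by exact_mod_cast hN
  -- basic moments
  have hZI : ∀ (p : Fin N × Fin (K + 1) × Bool) (n : ℕ), Integrable (fun ω => Z p ω ^ n) P :=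
    fun p n => Stmt2Aux.integrable_moment (hmeas p) (hgauss p) n
  have hm0 : ∀ p, ∫ ω, Z p ω ^ 0 ∂P = 1 := fun p => by
    rw [Stmt2Aux.moment_eq (hmeas p) (hgauss p), Stmt2Aux.gauss_moment_zero]
  have hm1 : ∀ p, ∫ ω, Z p ω ^ 1 ∂P = 0 := fun p => by
    rw [Stmt2Aux.moment_eq (hmeas p) (hgauss p), Stmt2Aux.gauss_moment_one]
  have hm2 : ∀ p, ∫ ω, Z p ω ^ 2 ∂P = 1/2 := fun p => by
    rw [Stmt2Aux.moment_eq (hmeas p) (hgauss p), Stmt2Aux.gauss_moment_two]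
  have hm3 : ∀ p, ∫ ω, Z p ω ^ 3 ∂P = 0 := fun p => by
    rw [Stmt2Aux.moment_eq (hmeas p) (hgauss p), Stmt2Aux.gauss_moment_three]
  have hm4 : ∀ p, ∫ ω, Z p ω ^ 4 ∂P = 3/4 := fun p => by
    rw [Stmt2Aux.moment_eq (hmeas p) (hgauss p), Stmt2Aux.gauss_moment_four]
  -- products over distinct coordinates
  have hprod : ∀ p q, p ≠ q → ∀ a b : ℕ,
      ∫ ω, Z p ω ^ a * Z q ω ^ b ∂P = (∫ ω, Z p ω ^ a ∂P) * (∫ ω, Z q ω ^ b ∂P) := by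
    intro p q hpq a b
    have hind : IndepFun (fun ω => Z p ω ^ a) (fun ω => Z q ω ^ b) P :=
      (hindep.indepFun hpq).comp (measurable_id.pow_const a) (measurable_id.pow_const b)
    exact hind.integral_fun_mul_eq_mul_integral ((hmeas p).pow_const a).aestronglyMeasurable
      ((hmeas q).pow_const b).aestronglyMeasurable
  have hprodI : ∀ p q, p ≠ q → ∀ a b : ℕ,
      Integrable (fun ω => Z p ω ^ a * Z q ω ^ b) P := by
    intro p q hpq a b
    have hind : IndepFun (fun ω => Z p ω ^ a) (fun ω => Z q ω ^ b) P :=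
      (hindep.indepFun hpq).comp (measurable_id.pow_const a) (measurable_id.pow_const b)
    exact hind.integrable_mul (hZI p a) (hZI q b)
  -- expansion of the channel gains
  have hg0 : gsq 0 = fun ω => c * ∑ j : Fin N × Bool, Z (Stmt2Aux.pu N K j) ω ^ 2 := by
    funext ω
    rw [hgsq 0 ω, Fintype.sum_prod_type, Finset.mul_sum, Finset.mul_sum]
    refine Finset.sum_congr rfl fun n _ => ?_
    rw [hh0 n ω, Complex.sq_norm, Complex.normSq_add_mul_I, Fintype.sum_bool, hc_def]
    simp only [Stmt2Aux.pu]
    ring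
  have hgk : gsq k.succ = fun ω =>
      c * ∑ j : Fin N × Bool,
        (s * Z (Stmt2Aux.pv N K k.succ j) ω + μ * Z (Stmt2Aux.pu N K j) ω) ^ 2 := by
    funext ω
    rw [hgsq k.succ ω, Fintype.sum_prod_type, Finset.mul_sum, Finset.mul_sum]
    refine Finset.sum_congr rfl fun n _ => ?_
    rw [hhk n k.succ hkk ω, Complex.sq_norm, Complex.normSq_add_mul_I, Fintype.sum_bool, hc_def]
    simp only [Stmt2Aux.pu, Stmt2Aux.pv]
    ring
  -- second moment of W
  have hexpW : ∀ j : Fin N × Bool,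
      (fun ω => (s * Z (Stmt2Aux.pv N K k.succ j) ω + μ * Z (Stmt2Aux.pu N K j) ω) ^ 2)
        = fun ω => s^2 * (Z (Stmt2Aux.pv N K k.succ j) ω ^ 2)
            + (2*s*μ) * (Z (Stmt2Aux.pu N K j) ω ^ 1 * Z (Stmt2Aux.pv N K k.succ j) ω ^ 1)
            + μ^2 * (Z (Stmt2Aux.pu N K j) ω ^ 2) := by
    intro j; funext ω; ring
  have hW2 : ∀ j : Fin N × Bool,
      ∫ ω, (s * Z (Stmt2Aux.pv N K k.succ j) ω + μ * Z (Stmt2Aux.pu N K j) ω) ^ 2 ∂P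
        = 1/2 := by
    intro j
    rw [hexpW j, Stmt2Aux.integral_comb3 (hZI _ 2)
        (hprodI _ _ (Stmt2Aux.pu_ne_pv hkk j j) 1 1) (hZI _ 2),
      hm2, hm2, hprod _ _ (Stmt2Aux.pu_ne_pv hkk j j) 1 1, hm1, hm1, hs2]
    ring
  have hW2I : ∀ j : Fin N × Bool,
      Integrable (fun ω =>
        (s * Z (Stmt2Aux.pv N K k.succ j) ω + μ * Z (Stmt2Aux.pu N K j) ω) ^ 2) P := by
    intro j
    rw [hexpW j]
    exact (((hZI _ 2).const_mul _).add
      ((hprodI _ _ (Stmt2Aux.pu_ne_pv hkk j j) 1 1).const_mul _)).add ((hZI _ 2).const_mul _)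
  -- pairwise product integrals
  have hUUv : ∀ j j' : Fin N × Bool,
      ∫ ω, Z (Stmt2Aux.pu N K j) ω ^ 2 * Z (Stmt2Aux.pu N K j') ω ^ 2 ∂P
        = 1/4 + (if j = j' then (1:ℝ)/2 else 0) := by
    intro j j'
    by_cases hjj : j = j'
    · subst hjj
      rw [if_pos rfl]
      have hexp : (fun ω => Z (Stmt2Aux.pu N K j) ω ^ 2 * Z (Stmt2Aux.pu N K j) ω ^ 2)
          = fun ω => Z (Stmt2Aux.pu N K j) ω ^ 4 := by funext ω; ring
      rw [hexp, hm4]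
      norm_num
    · rw [if_neg hjj, hprod _ _ (Stmt2Aux.pu_ne_pu hjj) 2 2, hm2, hm2]
      norm_num
  have hUUI : ∀ j j' : Fin N × Bool,
      Integrable (fun ω => Z (Stmt2Aux.pu N K j) ω ^ 2 * Z (Stmt2Aux.pu N K j') ω ^ 2) P := by
    intro j j'
    by_cases hjj : j = j'
    · subst hjj
      have hexp : (fun ω => Z (Stmt2Aux.pu N K j) ω ^ 2 * Z (Stmt2Aux.pu N K j) ω ^ 2)
          = fun ω => Z (Stmt2Aux.pu N K j) ω ^ 4 := by funext ω; ring
      rw [hexp]; exact hZI _ 4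
    · exact hprodI _ _ (Stmt2Aux.pu_ne_pu hjj) 2 2
  have hUWind : ∀ j j' : Fin N × Bool, j ≠ j' →
      IndepFun (fun ω => Z (Stmt2Aux.pu N K j) ω ^ 2)
        (fun ω => (s * Z (Stmt2Aux.pv N K k.succ j') ω + μ * Z (Stmt2Aux.pu N K j') ω) ^ 2) P := by
    intro j j' hjj
    have h1 : IndepFun (fun ω => (Z (Stmt2Aux.pv N K k.succ j') ω, Z (Stmt2Aux.pu N K j') ω))
        (Z (Stmt2Aux.pu N K j)) P :=
      hindep.indepFun_prodMk hmeas _ _ _ (Stmt2Aux.pu_ne_pv hkk j j').symm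
        (Stmt2Aux.pu_ne_pu (Ne.symm hjj))
    exact h1.symm.comp (measurable_id.pow_const 2)
      (by fun_prop : Measurable fun q : ℝ × ℝ => (s * q.1 + μ * q.2) ^ 2)
  have hUWv : ∀ j j' : Fin N × Bool,
      ∫ ω, Z (Stmt2Aux.pu N K j) ω ^ 2
          * (s * Z (Stmt2Aux.pv N K k.succ j') ω + μ * Z (Stmt2Aux.pu N K j') ω) ^ 2 ∂P
        = 1/4 + (if j = j' then μ^2/2 else 0) := by
    intro j j'
    by_cases hjj : j = j'
    · subst hjj
      rw [if_pos rfl]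
      have hexp : (fun ω => Z (Stmt2Aux.pu N K j) ω ^ 2
            * (s * Z (Stmt2Aux.pv N K k.succ j) ω + μ * Z (Stmt2Aux.pu N K j) ω) ^ 2)
          = fun ω => s^2 * (Z (Stmt2Aux.pu N K j) ω ^ 2 * Z (Stmt2Aux.pv N K k.succ j) ω ^ 2)
              + (2*s*μ) * (Z (Stmt2Aux.pu N K j) ω ^ 3 * Z (Stmt2Aux.pv N K k.succ j) ω ^ 1)
              + μ^2 * (Z (Stmt2Aux.pu N K j) ω ^ 4 * Z (Stmt2Aux.pv N K k.succ j) ω ^ 0) := by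
        funext ω; ring
      rw [hexp, Stmt2Aux.integral_comb3 (hprodI _ _ (Stmt2Aux.pu_ne_pv hkk j j) 2 2)
          (hprodI _ _ (Stmt2Aux.pu_ne_pv hkk j j) 3 1)
          (hprodI _ _ (Stmt2Aux.pu_ne_pv hkk j j) 4 0),
        hprod _ _ (Stmt2Aux.pu_ne_pv hkk j j) 2 2, hprod _ _ (Stmt2Aux.pu_ne_pv hkk j j) 3 1,
        hprod _ _ (Stmt2Aux.pu_ne_pv hkk j j) 4 0]
      simp only [hm0, hm1, hm2, hm3, hm4]
      rw [hs2]
      ring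
    · rw [if_neg hjj]
      have key := (hUWind j j' hjj).integral_fun_mul_eq_mul_integral
        ((hmeas _).pow_const 2).aestronglyMeasurable
        ((((hmeas _).const_mul s).add ((hmeas _).const_mul μ)).pow_const 2).aestronglyMeasurable
      rw [key, hm2, hW2 j']
      norm_num
  have hUWI : ∀ j j' : Fin N × Bool,
      Integrable (fun ω => Z (Stmt2Aux.pu N K j) ω ^ 2
        * (s * Z (Stmt2Aux.pv N K k.succ j') ω + μ * Z (Stmt2Aux.pu N K j') ω) ^ 2) P := by
    intro j j'
    by_cases hjj : j = j'
    · subst hjj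
      have hexp : (fun ω => Z (Stmt2Aux.pu N K j) ω ^ 2
            * (s * Z (Stmt2Aux.pv N K k.succ j) ω + μ * Z (Stmt2Aux.pu N K j) ω) ^ 2)
          = fun ω => s^2 * (Z (Stmt2Aux.pu N K j) ω ^ 2 * Z (Stmt2Aux.pv N K k.succ j) ω ^ 2)
              + (2*s*μ) * (Z (Stmt2Aux.pu N K j) ω ^ 3 * Z (Stmt2Aux.pv N K k.succ j) ω ^ 1)
              + μ^2 * (Z (Stmt2Aux.pu N K j) ω ^ 4 * Z (Stmt2Aux.pv N K k.succ j) ω ^ 0) := by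
        funext ω; ring
      rw [hexp]
      exact (((hprodI _ _ (Stmt2Aux.pu_ne_pv hkk j j) 2 2).const_mul _).add
        ((hprodI _ _ (Stmt2Aux.pu_ne_pv hkk j j) 3 1).const_mul _)).add
        ((hprodI _ _ (Stmt2Aux.pu_ne_pv hkk j j) 4 0).const_mul _)
    · exact (hUWind j j' hjj).integrable_mul (hZI _ 2) (hW2I j')
  have hWWind : ∀ j j' : Fin N × Bool, j ≠ j' →
      IndepFun
        (fun ω => (s * Z (Stmt2Aux.pv N K k.succ j) ω + μ * Z (Stmt2Aux.pu N K j) ω) ^ 2)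
        (fun ω => (s * Z (Stmt2Aux.pv N K k.succ j') ω + μ * Z (Stmt2Aux.pu N K j') ω) ^ 2) P := by
    intro j j' hjj
    have h1 : IndepFun (fun ω => (Z (Stmt2Aux.pv N K k.succ j) ω, Z (Stmt2Aux.pu N K j) ω))
        (fun ω => (Z (Stmt2Aux.pv N K k.succ j') ω, Z (Stmt2Aux.pu N K j') ω)) P :=
      hindep.indepFun_prodMk_prodMk hmeas _ _ _ _
        (Stmt2Aux.pv_ne_pv hjj) (Stmt2Aux.pu_ne_pv hkk j' j).symm
        (Stmt2Aux.pu_ne_pv hkk j j') (Stmt2Aux.pu_ne_pu hjj)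
    exact h1.comp (by fun_prop : Measurable fun q : ℝ × ℝ => (s * q.1 + μ * q.2) ^ 2)
      (by fun_prop : Measurable fun q : ℝ × ℝ => (s * q.1 + μ * q.2) ^ 2)
  have hWWv : ∀ j j' : Fin N × Bool,
      ∫ ω, (s * Z (Stmt2Aux.pv N K k.succ j) ω + μ * Z (Stmt2Aux.pu N K j) ω) ^ 2
          * (s * Z (Stmt2Aux.pv N K k.succ j') ω + μ * Z (Stmt2Aux.pu N K j') ω) ^ 2 ∂P
        = 1/4 + (if j = j' then (1:ℝ)/2 else 0) := by
    intro j j'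
    by_cases hjj : j = j'
    · subst hjj
      rw [if_pos rfl]
      have hexp : (fun ω => (s * Z (Stmt2Aux.pv N K k.succ j) ω + μ * Z (Stmt2Aux.pu N K j) ω) ^ 2
            * (s * Z (Stmt2Aux.pv N K k.succ j) ω + μ * Z (Stmt2Aux.pu N K j) ω) ^ 2)
          = fun ω => s^4 * (Z (Stmt2Aux.pu N K j) ω ^ 0 * Z (Stmt2Aux.pv N K k.succ j) ω ^ 4)
              + (4*s^3*μ) * (Z (Stmt2Aux.pu N K j) ω ^ 1 * Z (Stmt2Aux.pv N K k.succ j) ω ^ 3)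
              + (6*s^2*μ^2) * (Z (Stmt2Aux.pu N K j) ω ^ 2 * Z (Stmt2Aux.pv N K k.succ j) ω ^ 2)
              + (4*s*μ^3) * (Z (Stmt2Aux.pu N K j) ω ^ 3 * Z (Stmt2Aux.pv N K k.succ j) ω ^ 1)
              + μ^4 * (Z (Stmt2Aux.pu N K j) ω ^ 4 * Z (Stmt2Aux.pv N K k.succ j) ω ^ 0) := by
        funext ω; ring
      have hs4 : s^4 = (1 - μ^2)^2 := by rw [← hs2]; ring
      rw [hexp, Stmt2Aux.integral_comb5 (hprodI _ _ (Stmt2Aux.pu_ne_pv hkk j j) 0 4)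
          (hprodI _ _ (Stmt2Aux.pu_ne_pv hkk j j) 1 3)
          (hprodI _ _ (Stmt2Aux.pu_ne_pv hkk j j) 2 2)
          (hprodI _ _ (Stmt2Aux.pu_ne_pv hkk j j) 3 1)
          (hprodI _ _ (Stmt2Aux.pu_ne_pv hkk j j) 4 0),
        hprod _ _ (Stmt2Aux.pu_ne_pv hkk j j) 0 4, hprod _ _ (Stmt2Aux.pu_ne_pv hkk j j) 1 3,
        hprod _ _ (Stmt2Aux.pu_ne_pv hkk j j) 2 2, hprod _ _ (Stmt2Aux.pu_ne_pv hkk j j) 3 1,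
        hprod _ _ (Stmt2Aux.pu_ne_pv hkk j j) 4 0]
      simp only [hm0, hm1, hm2, hm3, hm4]
      rw [hs4, hs2]
      ring
    · rw [if_neg hjj]
      have key := (hWWind j j' hjj).integral_fun_mul_eq_mul_integral
        ((((hmeas _).const_mul s).add ((hmeas _).const_mul μ)).pow_const 2).aestronglyMeasurable
        ((((hmeas _).const_mul s).add ((hmeas _).const_mul μ)).pow_const 2).aestronglyMeasurable
      rw [key, hW2 j, hW2 j']
      norm_num
  have hWWI : ∀ j j' : Fin N × Bool,
      Integrable (fun ω =>
        (s * Z (Stmt2Aux.pv N K k.succ j) ω + μ * Z (Stmt2Aux.pu N K j) ω) ^ 2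
          * (s * Z (Stmt2Aux.pv N K k.succ j') ω + μ * Z (Stmt2Aux.pu N K j') ω) ^ 2) P := by
    intro j j'
    by_cases hjj : j = j'
    · subst hjj
      have hexp : (fun ω => (s * Z (Stmt2Aux.pv N K k.succ j) ω + μ * Z (Stmt2Aux.pu N K j) ω) ^ 2
            * (s * Z (Stmt2Aux.pv N K k.succ j) ω + μ * Z (Stmt2Aux.pu N K j) ω) ^ 2)
          = fun ω => s^4 * (Z (Stmt2Aux.pu N K j) ω ^ 0 * Z (Stmt2Aux.pv N K k.succ j) ω ^ 4)
              + (4*s^3*μ) * (Z (Stmt2Aux.pu N K j) ω ^ 1 * Z (Stmt2Aux.pv N K k.succ j) ω ^ 3)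
              + (6*s^2*μ^2) * (Z (Stmt2Aux.pu N K j) ω ^ 2 * Z (Stmt2Aux.pv N K k.succ j) ω ^ 2)
              + (4*s*μ^3) * (Z (Stmt2Aux.pu N K j) ω ^ 3 * Z (Stmt2Aux.pv N K k.succ j) ω ^ 1)
              + μ^4 * (Z (Stmt2Aux.pu N K j) ω ^ 4 * Z (Stmt2Aux.pv N K k.succ j) ω ^ 0) := by
        funext ω; ring
      rw [hexp]
      exact (((((hprodI _ _ (Stmt2Aux.pu_ne_pv hkk j j) 0 4).const_mul _).add
        ((hprodI _ _ (Stmt2Aux.pu_ne_pv hkk j j) 1 3).const_mul _)).add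
        ((hprodI _ _ (Stmt2Aux.pu_ne_pv hkk j j) 2 2).const_mul _)).add
        ((hprodI _ _ (Stmt2Aux.pu_ne_pv hkk j j) 3 1).const_mul _)).add
        ((hprodI _ _ (Stmt2Aux.pu_ne_pv hkk j j) 4 0).const_mul _)
    · exact (hWWind j j' hjj).integrable_mul (hW2I j) (hW2I j')
  -- cardinality
  have hcard : ((Fintype.card (Fin N × Bool) : ℕ) : ℝ) = 2 * (N:ℝ) := by
    simp [Fintype.card_prod]
    ring
  -- first moments
  have hT0 : ∫ ω, gsq 0 ω ∂P = c * (N:ℝ) := by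
    rw [hg0, integral_const_mul, integral_finset_sum _ (fun j _ => hZI _ 2)]
    simp only [hm2]
    rw [Finset.sum_const, Finset.card_univ, nsmul_eq_mul, hcard]
    ring
  have hTk : ∫ ω, gsq k.succ ω ∂P = c * (N:ℝ) := by
    rw [hgk, integral_const_mul, integral_finset_sum _ (fun j _ => hW2I j)]
    simp only [hW2]
    rw [Finset.sum_const, Finset.card_univ, nsmul_eq_mul, hcard]
    ring
  -- second moments
  have hT0sq : ∫ ω, gsq 0 ω ^ 2 ∂P = c^2 * ((N:ℝ)^2 + (N:ℝ)) := by
    have hexp : (fun ω => gsq 0 ω ^ 2) = fun ω => c^2 *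
        ∑ j : Fin N × Bool, ∑ j' : Fin N × Bool,
          Z (Stmt2Aux.pu N K j) ω ^ 2 * Z (Stmt2Aux.pu N K j') ω ^ 2 := by
      funext ω
      rw [hg0, mul_pow, pow_two, pow_two, Finset.sum_mul_sum, ← pow_two]
    rw [hexp, integral_const_mul,
      integral_finset_sum _ (fun j _ => integrable_finset_sum _ (fun j' _ => hUUI j j'))]
    have : ∀ j : Fin N × Bool, ∫ ω, (∑ j' : Fin N × Bool,
        Z (Stmt2Aux.pu N K j) ω ^ 2 * Z (Stmt2Aux.pu N K j') ω ^ 2) ∂P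
        = ((Fintype.card (Fin N × Bool) : ℕ) : ℝ)/4 + 1/2 := by
      intro j
      rw [integral_finset_sum _ (fun j' _ => hUUI j j')]
      simp only [hUUv]
      exact Stmt2Aux.sum_quarter_add (1/2) j
    simp only [this]
    rw [Finset.sum_const, Finset.card_univ, nsmul_eq_mul, hcard]
    ring
  have hTksq : ∫ ω, gsq k.succ ω ^ 2 ∂P = c^2 * ((N:ℝ)^2 + (N:ℝ)) := by
    have hexp : (fun ω => gsq k.succ ω ^ 2) = fun ω => c^2 *
        ∑ j : Fin N × Bool, ∑ j' : Fin N × Bool,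
          (s * Z (Stmt2Aux.pv N K k.succ j) ω + μ * Z (Stmt2Aux.pu N K j) ω) ^ 2
            * (s * Z (Stmt2Aux.pv N K k.succ j') ω + μ * Z (Stmt2Aux.pu N K j') ω) ^ 2 := by
      funext ω
      rw [hgk, mul_pow, pow_two, pow_two, Finset.sum_mul_sum, ← pow_two]
    rw [hexp, integral_const_mul,
      integral_finset_sum _ (fun j _ => integrable_finset_sum _ (fun j' _ => hWWI j j'))]
    have : ∀ j : Fin N × Bool, ∫ ω, (∑ j' : Fin N × Bool,
        (s * Z (Stmt2Aux.pv N K k.succ j) ω + μ * Z (Stmt2Aux.pu N K j) ω) ^ 2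
          * (s * Z (Stmt2Aux.pv N K k.succ j') ω + μ * Z (Stmt2Aux.pu N K j') ω) ^ 2) ∂P
        = ((Fintype.card (Fin N × Bool) : ℕ) : ℝ)/4 + 1/2 := by
      intro j
      rw [integral_finset_sum _ (fun j' _ => hWWI j j')]
      simp only [hWWv]
      exact Stmt2Aux.sum_quarter_add (1/2) j
    simp only [this]
    rw [Finset.sum_const, Finset.card_univ, nsmul_eq_mul, hcard]
    ring
  have hT0k : ∫ ω, gsq 0 ω * gsq k.succ ω ∂P = c^2 * ((N:ℝ)^2 + (N:ℝ) * μ^2) := by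
    have hexp : (fun ω => gsq 0 ω * gsq k.succ ω) = fun ω => c^2 *
        ∑ j : Fin N × Bool, ∑ j' : Fin N × Bool,
          Z (Stmt2Aux.pu N K j) ω ^ 2
            * (s * Z (Stmt2Aux.pv N K k.succ j') ω + μ * Z (Stmt2Aux.pu N K j') ω) ^ 2 := by
      funext ω
      rw [hg0, hgk, mul_mul_mul_comm, Finset.sum_mul_sum, ← pow_two]
    rw [hexp, integral_const_mul,
      integral_finset_sum _ (fun j _ => integrable_finset_sum _ (fun j' _ => hUWI j j'))]
    have : ∀ j : Fin N × Bool, ∫ ω, (∑ j' : Fin N × Bool,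
        Z (Stmt2Aux.pu N K j) ω ^ 2
          * (s * Z (Stmt2Aux.pv N K k.succ j') ω + μ * Z (Stmt2Aux.pu N K j') ω) ^ 2) ∂P
        = ((Fintype.card (Fin N × Bool) : ℕ) : ℝ)/4 + μ^2/2 := by
      intro j
      rw [integral_finset_sum _ (fun j' _ => hUWI j j')]
      simp only [hUWv]
      exact Stmt2Aux.sum_quarter_add (μ^2/2) j
    simp only [this]
    rw [Finset.sum_const, Finset.card_univ, nsmul_eq_mul, hcard]
    ring
  -- final computation
  rw [hT0k, hT0, hTk, hT0sq, hTksq]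
  have hcn : (0:ℝ) < c^2 * (N:ℝ) := by positivity
  rw [show c^2 * ((N:ℝ)^2 + (N:ℝ) * μ^2) - c * (N:ℝ) * (c * (N:ℝ))
      = μ^2 * (c^2 * (N:ℝ)) from by ring,
    show c^2 * ((N:ℝ)^2 + (N:ℝ)) - (c * (N:ℝ))^2 = c^2 * (N:ℝ) from by ring,
    Real.sqrt_mul_self hcn.le, mul_div_assoc, div_self hcn.ne', mul_one]
end

section
/- Let N ≥ 1 be an integer, ι > 0, Ω ≥ 1/2 a real number, φ > 0, Θ > 0. Let X and Y be independent random variables where X has the Nakagami density with shape N and spread ι, and Y has the Nakagami density with shape Ω and spread φ. Then P(X < ΘY) = ∫₀^∞ [2 Ω^Ω t^{2Ω−1} e^{−Ω t²/φ} / (Γ(Ω) φ^Ω)] · P(N, NΘ²t²/ι) dt, where P(a,x) = (1/Γ(a)) ∫₀^x u^{a−1} e^{−u} du is the regularized lower incomplete gamma function. -/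
open MeasureTheory ProbabilityTheory Real Set

/-- The Nakagami density with shape `m` and spread `Ω`. -/
noncomputable def nakagamiPDF (m Ω τ : ℝ) : ℝ :=
  if 0 < τ then
    2 * m ^ m * τ ^ (2 * m - 1) * Real.exp (-(m * τ ^ 2) / Ω) / (Real.Gamma m * Ω ^ m)
  else 0

/-- The Rayleigh density with power parameter `c`. -/
noncomputable def rayleighPDF (c τ : ℝ) : ℝ :=
  if 0 < τ then 2 * τ / c * Real.exp (-τ ^ 2 / c) else 0

/-- The regularized lower incomplete gamma function `P(a,x) = (1/Γ(a)) ∫₀^x u^{a−1} e^{−u} du`. -/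
noncomputable def regGammaP (a x : ℝ) : ℝ :=
  (∫ u in (0 : ℝ)..x, u ^ (a - 1) * Real.exp (-u)) / Real.Gamma a

lemma gamma_int_congr (N : ℕ) (hN : 1 ≤ N) (x : ℝ) :
    regGammaP N x = (∫ u in (0:ℝ)..x, u ^ (N - 1) * Real.exp (-u)) / Real.Gamma N := by
  have h : ((N:ℝ) - 1) = ((N - 1 : ℕ) : ℝ) := by rw [Nat.cast_sub hN, Nat.cast_one]
  rw [regGammaP, h]
  simp_rw [Real.rpow_natCast]

lemma regGammaP_continuous (N : ℕ) (hN : 1 ≤ N) : Continuous fun x => regGammaP N x := by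
  have h : (fun x => regGammaP N x)
      = fun x => (∫ u in (0:ℝ)..x, u ^ (N-1) * Real.exp (-u)) / Real.Gamma N := by
    funext x; exact gamma_int_congr N hN x
  rw [h]
  exact (intervalIntegral.continuous_primitive
    (fun a b => Continuous.intervalIntegrable (by fun_prop) a b) 0).div_const _

lemma regGammaP_nonneg (N : ℕ) (hN : 1 ≤ N) (x : ℝ) (hx : 0 ≤ x) : 0 ≤ regGammaP N x := by
  rw [gamma_int_congr N hN]
  refine div_nonneg ?_ (Real.Gamma_pos_of_pos (by positivity)).le
  refine intervalIntegral.integral_nonneg hx fun u hu => mul_nonneg (pow_nonneg hu.1 _) (Real.exp_pos _).le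

lemma nakagamiPDF_nonneg (m Ω τ : ℝ) (hm : 0 < m) (hΩ : 0 < Ω) : 0 ≤ nakagamiPDF m Ω τ := by
  rw [nakagamiPDF]
  split
  · have hΓ : 0 < Real.Gamma m := Real.Gamma_pos_of_pos hm
    rename_i hτ
    have h1 : (0:ℝ) ≤ m ^ m := Real.rpow_nonneg hm.le m
    have h2 : (0:ℝ) ≤ τ ^ (2*m-1) := Real.rpow_nonneg hτ.le _
    have h3 : (0:ℝ) < Ω ^ m := Real.rpow_pos_of_pos hΩ m
    positivity
  · exact le_refl _

lemma nakagamiPDF_measurable (m Ω : ℝ) : Measurable (nakagamiPDF m Ω) := by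
  unfold nakagamiPDF
  refine Measurable.ite (measurableSet_lt measurable_const measurable_id) ?_ measurable_const
  fun_prop

lemma nakagami_cdf (N : ℕ) (hN : 1 ≤ N) {ι : ℝ} (hι : 0 < ι) {c : ℝ} (hc : 0 < c) :
    (volume.withDensity fun τ => ENNReal.ofReal (nakagamiPDF N ι τ)) (Iio c)
      = ENNReal.ofReal (regGammaP N ((N:ℝ) * c ^ 2 / ι)) := by
  obtain ⟨k, rfl⟩ : ∃ k, N = k + 1 := ⟨N - 1, by omega⟩
  set n : ℕ := k + 1 with hn_def
  have hn : (0:ℝ) < n := by positivity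
  have hΓ : 0 < Real.Gamma n := Real.Gamma_pos_of_pos hn
  set h : ℝ → ℝ := fun τ =>
    2 * (n:ℝ)^n * τ^(2*n - 1) * Real.exp (-((n:ℝ) * τ^2)/ι) / (Real.Gamma n * ι^n) with hh
  have hcont : Continuous h := by fun_prop
  have hf_eq : ∀ τ, 0 < τ → nakagamiPDF n ι τ = h τ := by
    intro τ hτ
    rw [nakagamiPDF, if_pos hτ]
    have e1 : (2 * (n:ℝ) - 1) = ((2*n - 1 : ℕ) : ℝ) := by
      rw [Nat.cast_sub (by omega)]; push_cast; ring
    rw [e1, Real.rpow_natCast, Real.rpow_natCast, Real.rpow_natCast]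
  -- substitution
  set g : ℝ → ℝ := fun u => (u ^ (n-1) * Real.exp (-u)) / Real.Gamma n with hg
  have subst : ∫ x in (0:ℝ)..c, h x = regGammaP n ((n:ℝ) * c^2 / ι) := by
    have hderiv : ∀ x ∈ uIcc (0:ℝ) c,
        HasDerivAt (fun x => (n:ℝ) * x^2 / ι) (2*(n:ℝ)*x/ι) x := by
      intro x _
      have := ((hasDerivAt_pow 2 x).const_mul (n:ℝ)).div_const ι
      convert this using 1
      exacts [rfl, rfl, by rw [show (2:ℕ) - 1 = 1 from rfl, pow_one]; push_cast; ring]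
    have hcg : Continuous g := by fun_prop
    have key := intervalIntegral.integral_comp_smul_deriv hderiv (by fun_prop) hcg
    have heq : ∫ x in (0:ℝ)..c, h x
        = ∫ x in (0:ℝ)..c, (2*(n:ℝ)*x/ι) • ((g ∘ fun x => (n:ℝ)*x^2/ι) x) := by
      apply intervalIntegral.integral_congr
      intro x hx
      have hexp : -(((n:ℝ)) * x^2)/ι = -((n:ℝ)*x^2/ι) := neg_div _ _
      simp only [hh, hg, smul_eq_mul, Function.comp_apply, hexp]
      have hkk : n - 1 = k := rfl
      have h2n : 2*n - 1 = 2*k+1 := by omega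
      rw [hkk, h2n]
      field_simp
      have hinv : ι ^ k * ι⁻¹ ^ k = 1 := by rw [← mul_pow, mul_inv_cancel₀ hι.ne', one_pow]
      have e1 : (n:ℝ) ^ n = n * n ^ k := by rw [hn_def]; ring
      have e2 : ι ^ n = ι * ι ^ k := by rw [hn_def]; ring
      rw [e1, e2]
      linear_combination (-((n:ℝ) * (n:ℝ) ^ k * x * x ^ (k * 2) * ι)) * hinv
    rw [heq, key]
    have : (n:ℝ) * 0^2 / ι = 0 := by ring
    rw [this, gamma_int_congr n (by omega)]
    rw [intervalIntegral.integral_div]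
  -- measure computation
  rw [withDensity_apply _ measurableSet_Iio]
  have hind : ∫⁻ τ in Iio c, ENNReal.ofReal (nakagamiPDF n ι τ)
      = ∫⁻ τ in Ioo 0 c, ENNReal.ofReal (nakagamiPDF n ι τ) := by
    rw [← lintegral_indicator measurableSet_Iio, ← lintegral_indicator measurableSet_Ioo]
    congr 1
    funext τ
    by_cases h1 : 0 < τ
    · by_cases h2 : τ < c <;>
        simp [Set.indicator_apply, Set.mem_Iio, Set.mem_Ioo, h1, h2]
    · have hz : nakagamiPDF n ι τ = 0 := by rw [nakagamiPDF, if_neg h1]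
      simp [Set.indicator_apply, Set.mem_Iio, Set.mem_Ioo, h1, hz]
  rw [hind]
  have hint : IntegrableOn (nakagamiPDF n ι) (Ioo 0 c) := by
    have : IntegrableOn h (Ioo 0 c) :=
      (hcont.integrableOn_Icc (a := 0) (b := c)).mono_set Ioo_subset_Icc_self
    exact this.congr_fun (fun τ hτ => (hf_eq τ hτ.1).symm) measurableSet_Ioo
  rw [← ofReal_integral_eq_lintegral_ofReal hint
    (ae_restrict_of_forall_mem measurableSet_Ioo
      (fun τ _ => nakagamiPDF_nonneg _ _ _ hn hι))]
  congr 1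
  rw [setIntegral_congr_fun measurableSet_Ioo (fun τ hτ => hf_eq τ hτ.1),
    ← MeasureTheory.integral_Ioc_eq_integral_Ioo, ← intervalIntegral.integral_of_le hc.le, subst]

/-- if `X` is Nakagami with shape `N` and spread `ι`, `Y` is Nakagami
with shape `Ω ≥ 1/2` and spread `φ`, and `X, Y` are independent, then
`P(X < ΘY) = ∫₀^∞ [2Ω^Ω t^{2Ω−1} e^{−Ωt²/φ}/(Γ(Ω)φ^Ω)] P(N, NΘ²t²/ι) dt`. -/
theorem stmt_13
    {Ωs : Type*} [MeasurableSpace Ωs] (P : Measure Ωs) [IsProbabilityMeasure P]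
    (N : ℕ) (hN : 1 ≤ N) (ι Ω φ Θ : ℝ) (hι : 0 < ι) (hΩ : 1 / 2 ≤ Ω) (hφ : 0 < φ)
    (hΘ : 0 < Θ)
    (X Y : Ωs → ℝ) (hXmeas : Measurable X) (hYmeas : Measurable Y)
    (hX : Measure.map X P = volume.withDensity (fun τ => ENNReal.ofReal (nakagamiPDF N ι τ)))
    (hY : Measure.map Y P = volume.withDensity (fun τ => ENNReal.ofReal (nakagamiPDF Ω φ τ)))
    (hXY : IndepFun X Y P) :
    (P {ω | X ω < Θ * Y ω}).toReal =
      ∫ t in Set.Ioi (0 : ℝ),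
        (2 * Ω ^ Ω * t ^ (2 * Ω - 1) * Real.exp (-(Ω * t ^ 2) / φ) /
          (Real.Gamma Ω * φ ^ Ω)) * regGammaP N (N * Θ ^ 2 * t ^ 2 / ι) := by
  have hΩ0 : (0:ℝ) < Ω := lt_of_lt_of_le (by norm_num) hΩ
  set μX := volume.withDensity (fun τ => ENNReal.ofReal (nakagamiPDF N ι τ)) with hμX
  set μY := volume.withDensity (fun τ => ENNReal.ofReal (nakagamiPDF Ω φ τ)) with hμY
  haveI hPX : IsProbabilityMeasure μX := hX ▸ Measure.isProbabilityMeasure_map hXmeas.aemeasurable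
  haveI hPY : IsProbabilityMeasure μY := hY ▸ Measure.isProbabilityMeasure_map hYmeas.aemeasurable
  have hsm : MeasurableSet {p : ℝ × ℝ | p.1 < Θ * p.2} :=
    measurableSet_lt measurable_fst (measurable_const.mul measurable_snd)
  have hmap : Measure.map (fun ω => (X ω, Y ω)) P = μX.prod μY := by
    rw [(indepFun_iff_map_prod_eq_prod_map_map hXmeas.aemeasurable hYmeas.aemeasurable).mp hXY,
      hX, hY]
  have h1 : P {ω | X ω < Θ * Y ω} = (μX.prod μY) {p : ℝ × ℝ | p.1 < Θ * p.2} := by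
    rw [← hmap, Measure.map_apply (hXmeas.prodMk hYmeas) hsm]
    rfl
  set R : ℝ → ℝ := fun t => regGammaP (N:ℝ) ((N:ℝ) * Θ ^ 2 * t ^ 2 / ι) with hRdef
  have hRcont : Continuous R := (regGammaP_continuous N hN).comp (by fun_prop)
  set G : ℝ → ℝ := fun t => 2 * Ω ^ Ω * t ^ (2 * Ω - 1) * Real.exp (-(Ω * t ^ 2) / φ) /
          (Real.Gamma Ω * φ ^ Ω) with hGdef
  have hGeq : ∀ t, 0 < t → nakagamiPDF Ω φ t = G t := fun t ht => by
    rw [nakagamiPDF, if_pos ht]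
  have hGnn : ∀ t, 0 < t → 0 ≤ G t := fun t ht => by
    rw [← hGeq t ht]; exact nakagamiPDF_nonneg _ _ _ hΩ0 hφ
  have hGmeas : Measurable G := by fun_prop
  have h2 : (μX.prod μY) {p : ℝ × ℝ | p.1 < Θ * p.2}
      = ∫⁻ t in Ioi (0:ℝ), ENNReal.ofReal (G t * R t) := by
    rw [Measure.prod_apply_symm hsm]
    have hpre : ∀ y : ℝ, (fun x => (x, y)) ⁻¹' {p : ℝ × ℝ | p.1 < Θ * p.2} = Iio (Θ * y) :=
      fun y => rfl
    simp_rw [hpre]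
    have hmono : Monotone fun c : ℝ => μX (Iio c) :=
      fun a b hab => measure_mono (Iio_subset_Iio hab)
    have hmeas2 : Measurable fun y : ℝ => μX (Iio (Θ * y)) :=
      hmono.measurable.comp (measurable_id.const_mul Θ)
    rw [hμY, lintegral_withDensity_eq_lintegral_mul _
      ((nakagamiPDF_measurable Ω φ).ennreal_ofReal) hmeas2]
    have hptwise : ∀ y : ℝ,
        ((fun τ => ENNReal.ofReal (nakagamiPDF Ω φ τ)) * fun y => μX (Iio (Θ * y))) y
          = (Ioi (0:ℝ)).indicator (fun y => ENNReal.ofReal (G y * R y)) y := by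
      intro y
      by_cases hy : 0 < y
      · rw [Set.indicator_of_mem (show y ∈ Ioi (0:ℝ) from hy)]
        simp only [Pi.mul_apply]
        rw [hGeq y hy, hμX, nakagami_cdf N hN hι (by positivity : (0:ℝ) < Θ * y)]
        rw [← ENNReal.ofReal_mul (hGnn y hy)]
        congr 2
        rw [hRdef]
        congr 1
        ring
      · rw [Set.indicator_of_notMem (show y ∉ Ioi (0:ℝ) from hy)]
        simp only [Pi.mul_apply]
        rw [nakagamiPDF, if_neg hy]
        simp
    simp_rw [hptwise]
    rw [lintegral_indicator measurableSet_Ioi]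
  rw [h1, h2]
  rw [← integral_eq_lintegral_of_nonneg_ae ?_ ?_]
  · filter_upwards [ae_restrict_mem measurableSet_Ioi] with t ht
    exact mul_nonneg (hGnn t ht) (regGammaP_nonneg N hN _ (by positivity))
  · exact (hGmeas.mul hRcont.measurable).aestronglyMeasurable
end

section
/- The function Ω ↦ √Ω · Γ(Ω) / Γ(Ω + 1/2) is strictly decreasing on (0, ∞), where Γ is the Gamma function. Consequently, the ratio of the mean f-FAMA interference magnitude to the mean s-FAMA interference magnitude, (√π/2) · √Ω · Γ(Ω)/Γ(Ω + 1/2), is strictly decreasing in the shape parameter Ω. -/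
open Real Set MeasureTheory

section Stmt16Aux

private lemma s16_beta_ion {a : ℝ} (ha : 0 < a) :
    IntegrableOn (fun t : ℝ => t ^ (a - 1) * (1 - t) ^ (-(1/2) : ℝ)) (Ioo 0 1) := by
  have h := ((Complex.betaIntegral_convergent (u := a) (v := 1/2) (by simpa using ha)
    (by norm_num)).1).mono_set Ioo_subset_Ioc_self
  refine MeasureTheory.IntegrableOn.congr_fun h.norm ?_ measurableSet_Ioo
  intro x hx
  have hx0 : (0:ℝ) < x := hx.1
  have hx1 : (0:ℝ) < 1 - x := by linarith [hx.2]
  simp only [norm_mul]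
  rw [show ((1:ℂ) - (x:ℂ)) = ((1 - x : ℝ) : ℂ) by push_cast; ring,
    Complex.norm_cpow_eq_rpow_re_of_pos hx0, Complex.norm_cpow_eq_rpow_re_of_pos hx1]
  norm_num

private lemma s16_beta_val {a : ℝ} (ha : 0 < a) :
    ∫ t in Ioo (0:ℝ) 1, t ^ (a - 1) * (1 - t) ^ (-(1/2) : ℝ)
      = Real.Gamma a * Real.Gamma (1/2) / Real.Gamma (a + 1/2) := by
  have hg : Real.Gamma (a + 1/2) ≠ 0 := (Real.Gamma_pos_of_pos (by linarith)).ne'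
  rw [eq_div_iff hg]
  have h := Complex.Gamma_mul_Gamma_eq_betaIntegral (s := a) (t := 1/2)
    (by simpa using ha) (by norm_num)
  have hb : Complex.betaIntegral a (1/2)
      = ((∫ t in Ioo (0:ℝ) 1, t ^ (a - 1) * (1 - t) ^ (-(1/2) : ℝ) : ℝ) : ℂ) := by
    rw [Complex.betaIntegral, intervalIntegral.integral_of_le (by norm_num : (0:ℝ) ≤ 1),
      MeasureTheory.integral_Ioc_eq_integral_Ioo]
    have h1 : ∫ x in Ioo (0:ℝ) 1, ((x:ℂ) ^ ((a:ℂ) - 1) * (1 - (x:ℂ)) ^ ((1/2:ℂ) - 1))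
        = ∫ x in Ioo (0:ℝ) 1, ((x ^ (a - 1) * (1 - x) ^ (-(1/2) : ℝ) : ℝ) : ℂ) := by
      refine setIntegral_congr_fun measurableSet_Ioo ?_
      intro x hx
      have hx0 : (0:ℝ) < x := hx.1
      have hx1 : (0:ℝ) < 1 - x := by linarith [hx.2]
      dsimp only
      rw [Complex.ofReal_mul, Complex.ofReal_cpow hx0.le, Complex.ofReal_cpow hx1.le]
      push_cast
      norm_num
    rw [h1]
    exact integral_ofReal
  rw [hb] at h
  have h2 : ((Real.Gamma a * Real.Gamma (1/2) : ℝ) : ℂ)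
      = ((Real.Gamma (a + 1/2) * ∫ t in Ioo (0:ℝ) 1,
          t ^ (a - 1) * (1 - t) ^ (-(1/2) : ℝ) : ℝ) : ℂ) := by
    push_cast [← Complex.Gamma_ofReal]
    convert h using 3
  have h3 : Real.Gamma a * Real.Gamma (1/2)
      = Real.Gamma (a + 1/2) * ∫ t in Ioo (0:ℝ) 1, t ^ (a - 1) * (1 - t) ^ (-(1/2) : ℝ) := by
    exact_mod_cast h2
  rw [h3]; ring

private lemma s16_rpow_image {c : ℝ} (hc : 0 < c) :
    (fun t : ℝ => t ^ c) '' Ioo 0 1 = Ioo 0 1 := by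
  ext x
  constructor
  · rintro ⟨t, ht, rfl⟩
    exact ⟨Real.rpow_pos_of_pos ht.1 c, Real.rpow_lt_one ht.1.le ht.2 hc⟩
  · rintro hx
    exact ⟨x ^ c⁻¹, ⟨Real.rpow_pos_of_pos hx.1 _, Real.rpow_lt_one hx.1.le hx.2 (by positivity)⟩,
      Real.rpow_inv_rpow hx.1.le hc.ne'⟩

private lemma s16_subst {c : ℝ} (hc : 0 < c) (g : ℝ → ℝ) :
    ∫ x in Ioo (0:ℝ) 1, g x = ∫ t in Ioo (0:ℝ) 1, |c * t ^ (c - 1)| • g (t ^ c) := by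
  conv_lhs => rw [← s16_rpow_image hc]
  refine integral_image_eq_integral_abs_deriv_smul measurableSet_Ioo ?_ ?_ g
  · intro t ht
    exact (Real.hasDerivAt_rpow_const (Or.inl ht.1.ne')).hasDerivWithinAt
  · exact fun s hs t ht h =>
      Real.rpow_left_injOn (x := c) hc.ne' (le_of_lt hs.1) (le_of_lt ht.1) h

private lemma s16_subst_ion {c : ℝ} (hc : 0 < c) (g : ℝ → ℝ) :
    IntegrableOn g (Ioo (0:ℝ) 1) ↔
      IntegrableOn (fun t => |c * t ^ (c - 1)| • g (t ^ c)) (Ioo (0:ℝ) 1) := by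
  conv_lhs => rw [← s16_rpow_image hc]
  refine integrableOn_image_iff_integrableOn_abs_deriv_smul measurableSet_Ioo ?_ ?_ g
  · intro t ht
    exact (Real.hasDerivAt_rpow_const (Or.inl ht.1.ne')).hasDerivWithinAt
  · exact fun s hs t ht h =>
      Real.rpow_left_injOn (x := c) hc.ne' (le_of_lt hs.1) (le_of_lt ht.1) h

private lemma s16_mono_core {s : ℝ} (hs : 0 < s) :
    StrictMonoOn (fun Ω : ℝ => Ω - Ω * Real.exp (-(s * Ω⁻¹))) (Ioi 0) := by
  refine strictMonoOn_of_deriv_pos (convex_Ioi 0) ?_ ?_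
  · refine ContinuousOn.sub (continuousOn_id) ?_
    refine ContinuousOn.mul (continuousOn_id) (Real.continuous_exp.comp_continuousOn ?_)
    exact (continuousOn_const.mul (continuousOn_inv₀.mono fun x hx => ne_of_gt hx)).neg
  · intro x hx
    rw [interior_Ioi] at hx
    have hx0 : x ≠ 0 := ne_of_gt hx
    have hd : HasDerivAt (fun Ω : ℝ => Ω - Ω * Real.exp (-(s * Ω⁻¹)))
        (1 - (1 * Real.exp (-(s * x⁻¹)) +
          x * (Real.exp (-(s * x⁻¹)) * -(s * -(x ^ 2)⁻¹)))) x := by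
      have h1 : HasDerivAt (fun Ω : ℝ => -(s * Ω⁻¹)) (-(s * -(x^2)⁻¹)) x :=
        (((hasDerivAt_inv hx0).const_mul s).neg)
      exact (hasDerivAt_id x).sub ((hasDerivAt_id x).mul h1.exp)
    rw [hd.deriv]
    have ht : 0 < s * x⁻¹ := mul_pos hs (inv_pos.2 hx)
    have key : s * x⁻¹ + 1 < Real.exp (s * x⁻¹) := by
      have := Real.add_one_lt_exp (ne_of_gt ht)
      linarith
    have hexp : Real.exp (-(s * x⁻¹)) * (s * x⁻¹ + 1) < 1 := by
      rw [Real.exp_neg]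
      rw [inv_mul_lt_iff₀ (Real.exp_pos _)]
      simpa using key
    have hsimp : x * (Real.exp (-(s * x⁻¹)) * -(s * -(x ^ 2)⁻¹))
        = Real.exp (-(s * x⁻¹)) * (s * x⁻¹) := by
      field_simp
    rw [hsimp]
    nlinarith [Real.exp_pos (-(s * x⁻¹))]

private lemma s16_mono_pt {a b x : ℝ} (ha : 0 < a) (hab : a < b) (hx : x ∈ Ioo (0:ℝ) 1) :
    a * (1 - x ^ (1/a)) < b * (1 - x ^ (1/b)) := by
  have hlx : Real.log x < 0 := Real.log_neg hx.1 hx.2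
  set s : ℝ := -Real.log x with hs
  have hs0 : 0 < s := by simp only [hs]; linarith
  have key := s16_mono_core hs0 (mem_Ioi.2 ha) (mem_Ioi.2 (ha.trans hab)) hab
  have ea : x ^ (1/a) = Real.exp (-(s * a⁻¹)) := by
    rw [Real.rpow_def_of_pos hx.1]
    congr 1
    rw [hs]; ring
  have eb : x ^ (1/b) = Real.exp (-(s * b⁻¹)) := by
    rw [Real.rpow_def_of_pos hx.1]
    congr 1
    rw [hs]; ring
  rw [ea, eb]
  simpa [mul_sub] using key

/-- the inner function is positive on `(0,1)` -/
private lemma s16_inner_pos {c x : ℝ} (hc : 0 < c) (hx : x ∈ Ioo (0:ℝ) 1) :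
    0 < c * (1 - x ^ (1/c)) := by
  have : x ^ (1/c) < 1 := Real.rpow_lt_one hx.1.le hx.2 (by positivity)
  have h1 : 0 < 1 - x ^ (1/c) := by linarith
  positivity

/-- pointwise identity used for the substitution -/
private lemma s16_integrand_eq {c : ℝ} (hc : 0 < c) {t : ℝ} (ht : t ∈ Ioo (0:ℝ) 1) :
    |c * t ^ (c - 1)| • (c * (1 - (t ^ c) ^ (1/c))) ^ (-(1/2) : ℝ)
      = Real.sqrt c * (t ^ (c - 1) * (1 - t) ^ (-(1/2) : ℝ)) := by
  have ht0 : (0:ℝ) < t := ht.1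
  have ht1 : (0:ℝ) < 1 - t := by linarith [ht.2]
  have h1 : (t ^ c) ^ (1/c) = t := by
    rw [one_div, Real.rpow_rpow_inv ht0.le hc.ne']
  rw [h1, smul_eq_mul, abs_of_nonneg (by positivity),
    Real.mul_rpow hc.le ht1.le, Real.sqrt_eq_rpow]
  have h2 : c * t ^ (c - 1) * (c ^ (-(1/2):ℝ) * (1 - t) ^ (-(1/2):ℝ))
      = (c * c ^ (-(1/2):ℝ)) * (t ^ (c - 1) * (1 - t) ^ (-(1/2):ℝ)) := by ring
  rw [h2]
  congr 1
  rw [show c * c ^ (-(1/2):ℝ) = c ^ (1:ℝ) * c ^ (-(1/2):ℝ) by rw [Real.rpow_one],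
    ← Real.rpow_add hc]
  norm_num

/-- the integral representation -/
private lemma s16_repr {c : ℝ} (hc : 0 < c) :
    ∫ x in Ioo (0:ℝ) 1, (c * (1 - x ^ (1/c))) ^ (-(1/2) : ℝ)
      = Real.sqrt π * (Real.sqrt c * Real.Gamma c / Real.Gamma (c + 1/2)) := by
  rw [s16_subst hc (fun x => (c * (1 - x ^ (1/c))) ^ (-(1/2) : ℝ))]
  rw [setIntegral_congr_fun measurableSet_Ioo (fun t ht => s16_integrand_eq hc ht)]
  rw [MeasureTheory.integral_const_mul, s16_beta_val hc, Real.Gamma_one_half_eq]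
  field_simp

/-- integrability of the substituted integrand -/
private lemma s16_int {c : ℝ} (hc : 0 < c) :
    IntegrableOn (fun x : ℝ => (c * (1 - x ^ (1/c))) ^ (-(1/2) : ℝ)) (Ioo 0 1) := by
  rw [s16_subst_ion hc]
  refine MeasureTheory.IntegrableOn.congr_fun ?_
    (fun t ht => (s16_integrand_eq hc ht).symm) measurableSet_Ioo
  exact (s16_beta_ion hc).const_mul _

private lemma s16_anti :
    StrictAntiOn (fun Ω : ℝ => Real.sqrt Ω * Real.Gamma Ω / Real.Gamma (Ω + 1 / 2))
      (Set.Ioi 0) := by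
  intro a ha b hb hab
  rw [mem_Ioi] at ha hb
  have hπ : (0:ℝ) < Real.sqrt π := Real.sqrt_pos.2 Real.pi_pos
  have key : ∫ x in Ioo (0:ℝ) 1, (b * (1 - x ^ (1/b))) ^ (-(1/2) : ℝ)
      < ∫ x in Ioo (0:ℝ) 1, (a * (1 - x ^ (1/a))) ^ (-(1/2) : ℝ) := by
    have hia := s16_int ha
    have hib := s16_int hb
    have hpos : 0 < ∫ x in Ioo (0:ℝ) 1,
        ((a * (1 - x ^ (1/a))) ^ (-(1/2) : ℝ) - (b * (1 - x ^ (1/b))) ^ (-(1/2) : ℝ)) := by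
      rw [integral_pos_iff_support_of_nonneg_ae]
      · have hsub : Ioo (0:ℝ) 1 ⊆ Function.support fun x =>
            (a * (1 - x ^ (1/a))) ^ (-(1/2) : ℝ) - (b * (1 - x ^ (1/b))) ^ (-(1/2) : ℝ) := by
          intro x hx
          have hlt : (b * (1 - x ^ (1/b))) ^ (-(1/2) : ℝ)
              < (a * (1 - x ^ (1/a))) ^ (-(1/2) : ℝ) :=
            Real.rpow_lt_rpow_of_neg (s16_inner_pos ha hx) (s16_mono_pt ha hab hx)
              (by norm_num)
          exact sub_ne_zero.2 (ne_of_gt (by linarith))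
        calc (0:ENNReal) < (volume.restrict (Ioo (0:ℝ) 1)) (Ioo 0 1) := by
              rw [Measure.restrict_apply_self]; simp [Real.volume_Ioo]
          _ ≤ _ := measure_mono hsub
      · filter_upwards [ae_restrict_mem measurableSet_Ioo] with x hx
        have hlt : (b * (1 - x ^ (1/b))) ^ (-(1/2) : ℝ)
            < (a * (1 - x ^ (1/a))) ^ (-(1/2) : ℝ) :=
          Real.rpow_lt_rpow_of_neg (s16_inner_pos ha hx) (s16_mono_pt ha hab hx)
            (by norm_num)
        simp only [Pi.zero_apply]
        linarith
      · exact hia.sub hib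
    rw [integral_sub hia hib] at hpos
    linarith
  rw [s16_repr ha, s16_repr hb] at key
  dsimp only
  nlinarith [key, hπ]

end Stmt16Aux

/-- the function `Ω ↦ √Ω · Γ(Ω)/Γ(Ω + 1/2)` is strictly decreasing on
`(0,∞)`; consequently the ratio of mean interference magnitudes
`(√π/2) · √Ω · Γ(Ω)/Γ(Ω + 1/2)` is strictly decreasing in `Ω` on `(0,∞)`. -/
theorem stmt_16 :
    StrictAntiOn (fun Ω : ℝ => Real.sqrt Ω * Real.Gamma Ω / Real.Gamma (Ω + 1 / 2))
      (Set.Ioi 0) ∧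
    StrictAntiOn (fun Ω : ℝ =>
      (Real.sqrt π / 2) * (Real.sqrt Ω * Real.Gamma Ω / Real.Gamma (Ω + 1 / 2)))
      (Set.Ioi 0) := by
  refine ⟨s16_anti, fun a ha b hb hab => ?_⟩
  have h := s16_anti ha hb hab
  have hπ : (0:ℝ) < Real.sqrt π / 2 := by
    have := Real.sqrt_pos.2 Real.pi_pos; linarith
  exact mul_lt_mul_of_pos_left h hπ
end

section
/- For every real Ω > 1, one has 1 − (1/Ω)·(Γ(Ω + 1/2)/Γ(Ω))² < (4 − π)/4. Consequently, if X has the Rayleigh density with power parameter σ_I² = σ_s² φ and Y has the Nakagami density with shape Ω and spread φ (with φ > 0, σ_s > 0), then Var[X] > σ_s² Var[Y], i.e., for Ω > 1 the variance of the interference magnitude under f-FAMA strictly exceeds that under s-FAMA. -/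
open MeasureTheory ProbabilityTheory Real Set

section aux
open Finset

lemma integral_map_withDensity' {Ωs : Type*} [MeasurableSpace Ωs] (P : Measure Ωs)
    (X : Ωs → ℝ) (hXmeas : Measurable X) (p : ℝ → ℝ) (hmeas : Measurable p)
    (hnn : ∀ x, 0 ≤ p x)
    (hmap : Measure.map X P = volume.withDensity fun τ => ENNReal.ofReal (p τ))
    (g : ℝ → ℝ) (hg : Measurable g) :
    ∫ ω, g (X ω) ∂P = ∫ x, p x * g x := by
  rw [← integral_map hXmeas.aemeasurable hg.aestronglyMeasurable, hmap]
  rw [show (fun τ => ENNReal.ofReal (p τ)) = (fun τ => ((p τ).toNNReal : ENNReal)) from rfl]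
  rw [integral_withDensity_eq_integral_smul (hmeas.real_toNNReal)]
  congr 1; ext x
  simp [NNReal.smul_def, Real.coe_toNNReal _ (hnn x)]

lemma gauss_int {b q : ℝ} (hb : 0 < b) (hq : -1 < q) :
    ∫ x in Ioi (0:ℝ), x ^ q * exp (-b * x ^ 2) = b ^ (-(q+1)/2) * (1/2) * Gamma ((q+1)/2) := by
  rw [show (b : ℝ) ^ (-(q+1)/2) * (1/2) * Gamma ((q+1)/2)
      = b ^ (-(q+1)/(2:ℝ)) * (1/(2:ℝ)) * Gamma ((q+1)/(2:ℝ)) from rfl,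
    ← integral_rpow_mul_exp_neg_mul_rpow two_pos hq hb]
  refine setIntegral_congr_fun measurableSet_Ioi fun x hx => ?_
  rw [show ((2:ℝ)) = ((2:ℕ):ℝ) by norm_num, rpow_natCast]

lemma rayleigh_nonneg {c : ℝ} (hc : 0 < c) (x : ℝ) : 0 ≤ rayleighPDF c x := by
  unfold rayleighPDF
  split
  · positivity
  · exact le_refl 0
  

lemma rayleigh_measurable {c : ℝ} : Measurable (rayleighPDF c) := by
  unfold rayleighPDF
  refine Measurable.ite measurableSet_Ioi ?_ measurable_const
  fun_prop

lemma Gamma_three_halves : Gamma ((3:ℝ)/2) = Real.sqrt π / 2 := by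
  rw [show ((3:ℝ)/2) = 1/2 + 1 by norm_num, Gamma_add_one (by norm_num), Gamma_one_half_eq]
  ring

lemma rayleigh_zero_off {c x : ℝ} (hx : x ∉ Ioi (0:ℝ)) : rayleighPDF c x = 0 := by
  simp only [rayleighPDF, if_neg (not_lt.mpr (by simpa using hx))]

lemma rayleigh_mean {c : ℝ} (hc : 0 < c) :
    ∫ x, rayleighPDF c x * x = Real.sqrt π / 2 * Real.sqrt c := by
  rw [← setIntegral_eq_integral_of_forall_compl_eq_zero
      (s := Ioi (0:ℝ)) (fun x hx => by rw [rayleigh_zero_off hx, zero_mul])]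
  have : ∀ x ∈ Ioi (0:ℝ), rayleighPDF c x * x = (2/c) * (x ^ ((2:ℝ)) * exp (-(1/c) * x ^ 2)) := by
    intro x hx
    rw [rayleighPDF, if_pos (show (0:ℝ)<x from hx), show ((2:ℝ)) = ((2:ℕ):ℝ) by norm_num, rpow_natCast]
    rw [neg_div, neg_mul, one_div, inv_mul_eq_div]
    ring
  rw [setIntegral_congr_fun measurableSet_Ioi this, integral_const_mul,
    gauss_int (by positivity) (by norm_num)]
  rw [show (-(2+1)/2 : ℝ) = -(3/2) by norm_num, show ((2+1)/2 : ℝ) = 3/2 by norm_num,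
    Gamma_three_halves, rpow_neg (by positivity), one_div, inv_rpow hc.le, inv_inv]
  rw [show ((3:ℝ)/2) = (3:ℝ)/2 from rfl]
  have h32 : c ^ ((3:ℝ)/2) = c * Real.sqrt c := by
    rw [show ((3:ℝ)/2) = 1 + 1/2 by norm_num, rpow_add hc, rpow_one, ← sqrt_eq_rpow]
  rw [h32]
  field_simp

lemma Gamma_two' : Gamma (2:ℝ) = 1 := by
  rw [show (2:ℝ) = 1 + 1 by norm_num, Gamma_add_one (by norm_num), Gamma_one]; norm_num

lemma rayleigh_sq {c : ℝ} (hc : 0 < c) :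
    ∫ x, rayleighPDF c x * x ^ 2 = c := by
  rw [← setIntegral_eq_integral_of_forall_compl_eq_zero
      (s := Ioi (0:ℝ)) (fun x hx => by rw [rayleigh_zero_off hx, zero_mul])]
  have : ∀ x ∈ Ioi (0:ℝ), rayleighPDF c x * x ^ 2
      = (2/c) * (x ^ ((3:ℝ)) * exp (-(1/c) * x ^ 2)) := by
    intro x hx
    rw [rayleighPDF, if_pos (show (0:ℝ)<x from hx), show ((3:ℝ)) = ((3:ℕ):ℝ) by norm_num,
      rpow_natCast]
    rw [neg_div, neg_mul, one_div, inv_mul_eq_div]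
    ring
  rw [setIntegral_congr_fun measurableSet_Ioi this, integral_const_mul,
    gauss_int (by positivity) (by norm_num)]
  rw [show (-(3+1)/2 : ℝ) = -2 by norm_num, show ((3+1)/2 : ℝ) = 2 by norm_num,
    Gamma_two', rpow_neg (by positivity), one_div, inv_rpow hc.le, inv_inv]
  rw [show ((2:ℝ)) = ((2:ℕ):ℝ) by norm_num, rpow_natCast]
  field_simp

lemma nakagami_zero_off {m φ x : ℝ} (hx : x ∉ Ioi (0:ℝ)) : nakagamiPDF m φ x = 0 := by
  simp only [nakagamiPDF, if_neg (not_lt.mpr (by simpa using hx))]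

lemma nakagami_nonneg {m φ : ℝ} (hm : 0 < m) (hφ : 0 < φ) (x : ℝ) : 0 ≤ nakagamiPDF m φ x := by
  unfold nakagamiPDF
  split
  · have := Gamma_pos_of_pos hm
    positivity
  · exact le_refl 0

lemma nakagami_measurable {m φ : ℝ} : Measurable (nakagamiPDF m φ) := by
  unfold nakagamiPDF
  refine Measurable.ite measurableSet_Ioi ?_ measurable_const
  fun_prop

lemma nakagami_mean {m φ : ℝ} (hm : 0 < m) (hφ : 0 < φ) :
    ∫ x, nakagamiPDF m φ x * x = Gamma (m + 1/2) / Gamma m * (Real.sqrt φ / Real.sqrt m) := by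
  have hΓ := Gamma_pos_of_pos hm
  rw [← setIntegral_eq_integral_of_forall_compl_eq_zero
      (s := Ioi (0:ℝ)) (fun x hx => by rw [nakagami_zero_off hx, zero_mul])]
  have key : ∀ x ∈ Ioi (0:ℝ), nakagamiPDF m φ x * x
      = (2 * m ^ m / (Gamma m * φ ^ m)) * (x ^ (2*m) * exp (-(m/φ) * x ^ 2)) := by
    intro x hx
    have h0 : (0:ℝ) < x := hx
    have hxx : x ^ (2*m-1) * x = x ^ (2*m) := by
      rw [← rpow_add_one h0.ne' (2*m-1)]; norm_num
    rw [nakagamiPDF, if_pos h0, ← hxx, show -(m*x^2)/φ = -(m/φ)*x^2 by ring]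
    ring
  rw [setIntegral_congr_fun measurableSet_Ioi key, integral_const_mul,
    gauss_int (by positivity) (by nlinarith)]
  rw [show (-(2*m+1)/2 : ℝ) = -(m+1/2) by ring, show ((2*m+1)/2 : ℝ) = m+1/2 by ring,
    rpow_neg (by positivity), div_rpow hm.le hφ.le,
    rpow_add hm, rpow_add hφ, sqrt_eq_rpow, sqrt_eq_rpow]
  have h1 : (m:ℝ) ^ (m:ℝ) ≠ 0 := (rpow_pos_of_pos hm m).ne'
  have h2 : (φ:ℝ) ^ (m:ℝ) ≠ 0 := (rpow_pos_of_pos hφ m).ne'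
  have h3 : (m:ℝ) ^ ((1:ℝ)/2) ≠ 0 := (rpow_pos_of_pos hm _).ne'
  have h4 : (φ:ℝ) ^ ((1:ℝ)/2) ≠ 0 := (rpow_pos_of_pos hφ _).ne'
  field_simp

lemma nakagami_sq {m φ : ℝ} (hm : 0 < m) (hφ : 0 < φ) :
    ∫ x, nakagamiPDF m φ x * x ^ 2 = φ := by
  have hΓ := Gamma_pos_of_pos hm
  rw [← setIntegral_eq_integral_of_forall_compl_eq_zero
      (s := Ioi (0:ℝ)) (fun x hx => by rw [nakagami_zero_off hx, zero_mul])]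
  have key : ∀ x ∈ Ioi (0:ℝ), nakagamiPDF m φ x * x ^ 2
      = (2 * m ^ m / (Gamma m * φ ^ m)) * (x ^ (2*m+1) * exp (-(m/φ) * x ^ 2)) := by
    intro x hx
    have h0 : (0:ℝ) < x := hx
    have hxx : x ^ (2*m-1) * x ^ (2:ℝ) = x ^ (2*m+1) := by
      rw [← rpow_add h0, show 2*m-1+2 = 2*m+1 by ring]
    have hx2 : x ^ (2:ℕ) = x ^ ((2:ℕ):ℝ) := (rpow_natCast x 2).symm
    rw [nakagamiPDF, if_pos h0, show -(m*x^2)/φ = -(m/φ)*x^2 by ring]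
    push_cast at hx2
    rw [hx2, ← hxx]
    ring
  rw [setIntegral_congr_fun measurableSet_Ioi key, integral_const_mul,
    gauss_int (by positivity) (by nlinarith)]
  rw [show (-(2*m+1+1)/2 : ℝ) = -(m+1) by ring, show ((2*m+1+1)/2 : ℝ) = m+1 by ring,
    rpow_neg (by positivity), div_rpow hm.le hφ.le,
    rpow_add hm, rpow_add hφ, rpow_one, rpow_one, Gamma_add_one hm.ne']
  have h1 : (m:ℝ) ^ (m:ℝ) ≠ 0 := (rpow_pos_of_pos hm m).ne'
  have h2 : (φ:ℝ) ^ (m:ℝ) ≠ 0 := (rpow_pos_of_pos hφ m).ne'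
  field_simp

noncomputable def gR (x : ℝ) : ℝ := Gamma (x+1/2)^2 / (Gamma x * Gamma (x+1))
noncomputable def rR (x : ℝ) : ℝ := (x+1/2)^2 / (x*(x+1))

lemma gamma_sq_le {a b : ℝ} (ha : 0 < a) (hb : 0 < b) :
    Gamma ((a+b)/2)^2 ≤ Gamma a * Gamma b := by
  have hmid : (0:ℝ) < (a+b)/2 := by linarith
  have h := convexOn_log_Gamma.2 (mem_Ioi.mpr ha) (mem_Ioi.mpr hb)
    (by norm_num : (0:ℝ) ≤ 1/2) (by norm_num : (0:ℝ) ≤ 1/2) (by norm_num)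
  simp only [Function.comp_apply, smul_eq_mul] at h
  rw [show (1/2:ℝ) * a + (1/2:ℝ) * b = (a+b)/2 by ring] at h
  have := exp_le_exp.mpr h
  rw [exp_add] at this
  rw [exp_log (Gamma_pos_of_pos hmid)] at this
  calc Gamma ((a+b)/2)^2 = Gamma ((a+b)/2) * Gamma ((a+b)/2) := sq (Gamma ((a+b)/2)) ▸ by ring
    _ ≤ (exp (1/2 * log (Gamma a)) * exp (1/2 * log (Gamma b)))
        * (exp (1/2 * log (Gamma a)) * exp (1/2 * log (Gamma b))) := by
        exact mul_le_mul this this (Gamma_pos_of_pos hmid).le (by positivity)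
    _ = exp (log (Gamma a)) * exp (log (Gamma b)) := by
        rw [← exp_add, ← exp_add, ← exp_add]; ring_nf
    _ = Gamma a * Gamma b := by
        rw [exp_log (Gamma_pos_of_pos ha), exp_log (Gamma_pos_of_pos hb)]

lemma gR_pos {x : ℝ} (hx : 0 < x) : 0 < gR x := by
  have h1 := Gamma_pos_of_pos hx
  have h2 := Gamma_pos_of_pos (show (0:ℝ) < x + 1 by linarith)
  have h3 := Gamma_pos_of_pos (show (0:ℝ) < x + 1/2 by linarith)
  unfold gR; positivity

lemma gR_le_one {x : ℝ} (hx : 0 < x) : gR x ≤ 1 := by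
  have h := gamma_sq_le hx (show (0:ℝ) < x + 1 by linarith)
  rw [show (x + (x+1))/2 = x + 1/2 by ring] at h
  have h1 := Gamma_pos_of_pos hx
  have h2 := Gamma_pos_of_pos (show (0:ℝ) < x + 1 by linarith)
  unfold gR
  rw [div_le_one (by positivity)]
  exact h

lemma gR_lower {x : ℝ} (hx : 0 < x) : x / (x + 1/2) ≤ gR x := by
  have h := gamma_sq_le (show (0:ℝ) < x + 1/2 by linarith) (show (0:ℝ) < x + 3/2 by linarith)
  rw [show ((x+1/2) + (x+3/2))/2 = x + 1 by ring,
    show x + 3/2 = (x + 1/2) + 1 by ring, Gamma_add_one (show (x+1/2:ℝ) ≠ 0 by positivity)] at h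
  -- h : Γ(x+1)^2 ≤ Γ(x+1/2) * ((x+1/2) * Γ(x+1/2))
  have h1 := Gamma_pos_of_pos hx
  have h2 := Gamma_pos_of_pos (show (0:ℝ) < x + 1 by linarith)
  have h3 := Gamma_pos_of_pos (show (0:ℝ) < x + 1/2 by linarith)
  unfold gR
  rw [div_le_div_iff₀ (by linarith) (by positivity)]
  have hrec : Gamma (x+1) = x * Gamma x := Gamma_add_one hx.ne'
  nlinarith [sq_nonneg (Gamma (x+1/2)), sq_nonneg (Gamma (x+1))]

lemma rR_pos {x : ℝ} (hx : 0 < x) : 0 < rR x := by unfold rR; positivity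

lemma rR_gt_one {x : ℝ} (hx : 0 < x) : 1 < rR x := by
  unfold rR
  rw [lt_div_iff₀ (by positivity)]
  nlinarith

lemma rR_anti {x y : ℝ} (hx : 0 < x) (hxy : x ≤ y) : rR y ≤ rR x := by
  unfold rR
  rw [div_le_div_iff₀ (by nlinarith) (by nlinarith)]
  nlinarith

lemma rR_anti_strict {x y : ℝ} (hx : 0 < x) (hxy : x < y) : rR y < rR x := by
  unfold rR
  rw [div_lt_div_iff₀ (by nlinarith) (by nlinarith)]
  nlinarith

lemma gR_rec {x : ℝ} (hx : 0 < x) : gR (x+1) = gR x * rR x := by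
  unfold gR rR
  have h1 := Gamma_pos_of_pos hx
  have h2 := Gamma_pos_of_pos (show (0:ℝ) < x + 1 by linarith)
  have h3 := Gamma_pos_of_pos (show (0:ℝ) < x + 1/2 by linarith)
  rw [show x + 1 + 1/2 = (x + 1/2) + 1 by ring,
    Gamma_add_one (show (x+1/2:ℝ) ≠ 0 by positivity),
    show x + 1 + 1 = (x + 1) + 1 from rfl,
    Gamma_add_one (show (x+1:ℝ) ≠ 0 by positivity),
    Gamma_add_one hx.ne']
  field_simp

lemma gR_iter {x : ℝ} (hx : 0 < x) (n : ℕ) :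
    gR (x + n) = gR x * ∏ k ∈ Finset.range n, rR (x + k) := by
  induction n with
  | zero => simp
  | succ n ih =>
    have : x + (n+1:ℕ) = (x + n) + 1 := by push_cast; ring
    rw [this, gR_rec (by positivity), ih, Finset.prod_range_succ, mul_assoc]

lemma prod_rR_le {x : ℝ} (hx : 1 < x) (n : ℕ) (hn : 1 ≤ n) :
    ∏ k ∈ Finset.range n, rR (x + k) ≤ (rR x / rR 1) * ∏ k ∈ Finset.range n, rR (1 + k) := by
  obtain ⟨m, rfl⟩ := Nat.exists_eq_add_of_le hn
  have h1 : (0:ℝ) < rR 1 := rR_pos one_pos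
  have hx0 : (0:ℝ) < x := by linarith
  have hRHS : (rR x / rR 1) * ∏ k ∈ Finset.range (1+m), rR ((1:ℝ) + k)
      = rR x * ∏ k ∈ Finset.range m, rR ((1:ℝ) + (1+k:ℕ)) := by
    rw [Finset.prod_range_add]
    simp only [Finset.prod_range_one, Nat.cast_zero, add_zero]
    field_simp
  rw [hRHS, Finset.prod_range_add]
  simp only [Finset.prod_range_one, Nat.cast_zero, add_zero]
  refine mul_le_mul_of_nonneg_left ?_ (rR_pos hx0).le
  refine Finset.prod_le_prod (fun k _ => (rR_pos (by positivity)).le) (fun k _ => ?_)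
  exact rR_anti (by positivity) (by push_cast; linarith)

lemma gR_one : gR 1 = π / 4 := by
  unfold gR
  rw [show (1:ℝ) + 1/2 = 1/2 + 1 by ring, Gamma_add_one (by norm_num : (1/2:ℝ) ≠ 0),
    Gamma_one_half_eq, Gamma_one, Gamma_add_one (one_ne_zero), Gamma_one]
  rw [mul_pow, sq_sqrt pi_pos.le]
  ring

lemma gR_gt {x : ℝ} (hx : 1 < x) : π / 4 < gR x := by
  have hx0 : (0:ℝ) < x := by linarith
  have hρ : 1 < rR 1 / rR x := by
    rw [lt_div_iff₀ (rR_pos hx0), one_mul]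
    exact rR_anti_strict one_pos hx
  set ρ : ℝ := rR 1 / rR x with hρdef
  obtain ⟨n, hn⟩ := exists_nat_gt (1 / (2 * (ρ - 1)))
  have hn1 : (1:ℕ) ≤ n + 1 := by omega
  set N := n + 1 with hN
  -- key numeric: (x+N)/(x+N+1/2) * ρ > 1
  have hkey : 1 < (x + N)/(x + N + 1/2) * ρ := by
    rw [show (x + N)/(x + N + 1/2) * ρ = ((x+N)*ρ)/(x + N + 1/2) by ring,
      lt_div_iff₀ (by positivity)]
    have hnN : (n:ℝ) ≤ N := by push_cast [hN]; linarith
    have h2 : 1 / (2 * (ρ - 1)) < N := lt_of_lt_of_le hn hnN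
    rw [div_lt_iff₀ (by linarith)] at h2
    nlinarith
  have hPx := gR_iter hx0 N
  have hP1 := gR_iter one_pos N
  have hup : gR 1 * ∏ k ∈ Finset.range N, rR (1 + k) ≤ 1 := by
    rw [← hP1]; exact gR_le_one (by positivity)
  have hlo : (x + N)/(x + N + 1/2) ≤ gR x * ∏ k ∈ Finset.range N, rR (x + k) := by
    rw [← hPx]; exact gR_lower (by positivity)
  have hprodle := prod_rR_le hx N hn1
  have hPxpos : (0:ℝ) < ∏ k ∈ Finset.range N, rR (x + k) :=
    Finset.prod_pos fun k _ => rR_pos (by positivity)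
  have hP1pos : (0:ℝ) < ∏ k ∈ Finset.range N, rR (1 + k) :=
    Finset.prod_pos fun k _ => rR_pos (by positivity)
  have hg1 : gR 1 = π/4 := gR_one
  have hπ : (0:ℝ) < π/4 := by positivity
  have hrx := rR_pos hx0
  have hr1 := rR_pos one_pos
  -- from hup : ∏ r(1+k) ≤ (4/π) ... i.e. gR 1 ≤ 1/P1
  -- gR x ≥ ((x+N)/(x+N+1/2)) / Px ≥ ((x+N)/(x+N+1/2)) * (ρ / P1) ≥ ((x+N)/(x+N+1/2)) * ρ * gR 1
  set A : ℝ := (x + N)/(x + N + 1/2) with hA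
  have hApos : 0 < A := by rw [hA]; positivity
  have h5 : gR 1 ≤ 1 / (∏ k ∈ Finset.range N, rR (1 + k)) := by
    rw [le_div_iff₀ hP1pos]; exact hup
  have h6 : A / (∏ k ∈ Finset.range N, rR (x + k)) ≤ gR x := by
    rw [div_le_iff₀ hPxpos]; exact hlo
  have h7 : A / ((rR x / rR 1) * ∏ k ∈ Finset.range N, rR (1 + k))
      ≤ A / (∏ k ∈ Finset.range N, rR (x + k)) :=
    div_le_div_of_nonneg_left hApos.le hPxpos hprodle
  have heq : A / ((rR x / rR 1) * ∏ k ∈ Finset.range N, rR (1 + k))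
      = A * ρ * (1 / (∏ k ∈ Finset.range N, rR (1 + k))) := by
    rw [hρdef]; field_simp
  have h8 : A * ρ * gR 1 ≤ A * ρ * (1 / (∏ k ∈ Finset.range N, rR (1 + k))) :=
    mul_le_mul_of_nonneg_left h5 (by positivity)
  have final : A * ρ * gR 1 ≤ gR x := by
    calc A * ρ * gR 1 ≤ A * ρ * (1 / (∏ k ∈ Finset.range N, rR (1 + k))) := h8
      _ = A / ((rR x / rR 1) * ∏ k ∈ Finset.range N, rR (1 + k)) := heq.symm
      _ ≤ A / (∏ k ∈ Finset.range N, rR (x + k)) := h7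
      _ ≤ gR x := h6
  have hg1pos : 0 < gR 1 := gR_pos one_pos
  calc π/4 = gR 1 := hg1.symm
    _ < A * ρ * gR 1 := by
        rw [show A * ρ * gR 1 = (A * ρ) * gR 1 from rfl]
        exact (lt_mul_iff_one_lt_left hg1pos).mpr hkey
    _ ≤ gR x := final

lemma part1 {Ω : ℝ} (hΩ : 1 < Ω) :
    1 - (1 / Ω) * (Real.Gamma (Ω + 1 / 2) / Real.Gamma Ω) ^ 2 < (4 - π) / 4 := by
  have hΩ0 : (0:ℝ) < Ω := by linarith
  have hΓ : (0:ℝ) < Gamma Ω := Gamma_pos_of_pos hΩ0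
  have hid : (1 / Ω) * (Gamma (Ω + 1 / 2) / Gamma Ω) ^ 2 = gR Ω := by
    unfold gR
    rw [Gamma_add_one hΩ0.ne']
    field_simp
  have := gR_gt hΩ
  rw [← hid] at this
  linarith

end aux

theorem stmt_18
    {Ωs : Type*} [MeasurableSpace Ωs] (P : Measure Ωs) [IsProbabilityMeasure P]
    (Ω φ σs : ℝ) (hΩ : 1 < Ω) (hφ : 0 < φ) (hσs : 0 < σs)
    (X Y : Ωs → ℝ) (hXmeas : Measurable X) (hYmeas : Measurable Y)
    (hX : Measure.map X P =
      volume.withDensity (fun τ => ENNReal.ofReal (rayleighPDF (σs ^ 2 * φ) τ)))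
    (hY : Measure.map Y P =
      volume.withDensity (fun τ => ENNReal.ofReal (nakagamiPDF Ω φ τ))) :
    (1 - (1 / Ω) * (Real.Gamma (Ω + 1 / 2) / Real.Gamma Ω) ^ 2 < (4 - π) / 4) ∧
    (σs ^ 2 * ((∫ ω, (Y ω) ^ 2 ∂P) - (∫ ω, Y ω ∂P) ^ 2) <
      (∫ ω, (X ω) ^ 2 ∂P) - (∫ ω, X ω ∂P) ^ 2) := by
  have hΩ0 : (0:ℝ) < Ω := by linarith
  have hc : (0:ℝ) < σs ^ 2 * φ := by positivity
  refine ⟨part1 hΩ, ?_⟩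
  have hEX : ∫ ω, X ω ∂P = √π / 2 * √(σs ^ 2 * φ) := by
    have := integral_map_withDensity' P X hXmeas _ rayleigh_measurable
      (rayleigh_nonneg hc) hX (fun x => x) measurable_id
    simpa using this.trans (rayleigh_mean hc)
  have hEX2 : ∫ ω, (X ω) ^ 2 ∂P = σs ^ 2 * φ := by
    have := integral_map_withDensity' P X hXmeas _ rayleigh_measurable
      (rayleigh_nonneg hc) hX (fun x => x ^ 2) (measurable_id.pow_const 2)
    simpa using this.trans (rayleigh_sq hc)
  have hEY : ∫ ω, Y ω ∂P = Gamma (Ω + 1/2) / Gamma Ω * (√φ / √Ω) := by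
    have := integral_map_withDensity' P Y hYmeas _ nakagami_measurable
      (nakagami_nonneg hΩ0 hφ) hY (fun x => x) measurable_id
    simpa using this.trans (nakagami_mean hΩ0 hφ)
  have hEY2 : ∫ ω, (Y ω) ^ 2 ∂P = φ := by
    have := integral_map_withDensity' P Y hYmeas _ nakagami_measurable
      (nakagami_nonneg hΩ0 hφ) hY (fun x => x ^ 2) (measurable_id.pow_const 2)
    simpa using this.trans (nakagami_sq hΩ0 hφ)
  rw [hEX, hEX2, hEY, hEY2]
  have e1 : (Gamma (Ω + 1/2) / Gamma Ω * (√φ / √Ω)) ^ 2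
      = (Gamma (Ω + 1/2) / Gamma Ω) ^ 2 * (φ / Ω) := by
    rw [mul_pow, div_pow √φ, sq_sqrt hφ.le, sq_sqrt hΩ0.le]
  have e2 : (√π / 2 * √(σs ^ 2 * φ)) ^ 2 = π / 4 * (σs ^ 2 * φ) := by
    rw [mul_pow, div_pow, sq_sqrt pi_pos.le, sq_sqrt hc.le]
    ring
  rw [e1, e2]
  have h1 := part1 hΩ
  have key := mul_lt_mul_of_pos_left h1 hc
  have lhs_eq : σs ^ 2 * (φ - (Gamma (Ω + 1/2) / Gamma Ω) ^ 2 * (φ / Ω))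
      = (σs ^ 2 * φ) * (1 - (1 / Ω) * (Gamma (Ω + 1/2) / Gamma Ω) ^ 2) := by ring
  have rhs_eq : σs ^ 2 * φ - π / 4 * (σs ^ 2 * φ) = (σs ^ 2 * φ) * ((4 - π) / 4) := by ring
  rw [lhs_eq, rhs_eq]
  exact key
end
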